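/- arXiv:2103.10471 — 4 statements merged into one kernel-verified Lean document; each statement's English description precedes it below -/
import Mathlib

section
/- Let α, p ∈ (0,1). For r ≥ 0 define p_r = ∑_{k=r}^∞ (−1)^{k−r} C(k,r) · p^k α^{k(k−1)/2} / ∏_{l=1}^{k} (1 − α^l). Then each series defining p_r converges absolutely, p_r ≥ 0 for all r, ∑_{r=0}^∞ p_r = 1, and for every z ∈ [0,1], ∑_{r=0}^∞ p_r z^r = ∏_{i=0}^∞ (1 − p α^i (1 − z)). In other words, (p_r) is the marginal pmf of the stationary INAR(1) process with Bernoulli(p) innovations, obtained as the weak limit of the Poissonian Binomial(n, α, p) distributions as n → ∞. -/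
open Finset Filter Real

set_option maxHeartbeats 1000000

namespace Stmt10Aux

/-- triangular number exponent -/
def T (k : ℕ) : ℕ := k * (k - 1) / 2

lemma T_succ (k : ℕ) : T (k + 1) = T k + k := by
  cases k with
  | zero => rfl
  | succ n =>
    show (n + 2) * (n + 2 - 1) / 2 = (n + 1) * (n + 1 - 1) / 2 + (n + 1)
    have h : (n + 2) * (n + 2 - 1) = (n + 1) * (n + 1 - 1) + (n + 1) * 2 := by
      have e1 : n + 2 - 1 = n + 1 := rfl
      have e2 : n + 1 - 1 = n := rfl
      rw [e1, e2]; ring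
    rw [h, Nat.add_mul_div_right _ _ (by norm_num : (0:ℕ) < 2)]

lemma T_add (m r : ℕ) : T (m + r) = T m + T r + m * r := by
  induction m with
  | zero => simp [T]
  | succ n ih =>
    have h1 : n + 1 + r = (n + r) + 1 := by omega
    rw [h1, T_succ, ih, T_succ]
    ring

/-- partial products of `(1 - α^(l+1))` -/
noncomputable def D (α : ℝ) (k : ℕ) : ℝ := ∏ l ∈ Finset.range k, (1 - α ^ (l + 1))

variable {α : ℝ}

lemma D_succ (α : ℝ) (k : ℕ) : D α (k + 1) = D α k * (1 - α ^ (k + 1)) :=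
  Finset.prod_range_succ _ _

lemma D_pos (hα0 : 0 < α) (hα1 : α < 1) (k : ℕ) : 0 < D α k := by
  apply Finset.prod_pos
  intro l _
  have : α ^ (l + 1) < 1 := pow_lt_one₀ hα0.le hα1 (Nat.succ_ne_zero l)
  linarith

lemma D_le_one (hα0 : 0 < α) (hα1 : α < 1) (k : ℕ) : D α k ≤ 1 := by
  apply Finset.prod_le_one
  · intro l _
    have : α ^ (l + 1) < 1 := pow_lt_one₀ hα0.le hα1 (Nat.succ_ne_zero l)
    linarith
  · intro l _
    have : 0 < α ^ (l + 1) := pow_pos hα0 _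
    linarith

/-- uniform positive lower bound for the `D` -/
noncomputable def Ebnd (α : ℝ) : ℝ := Real.exp (-(α / ((1 - α) * (1 - α))))

lemma Ebnd_pos (α : ℝ) : 0 < Ebnd α := Real.exp_pos _

lemma exp_le_one_sub (hα0 : 0 < α) (hα1 : α < 1) {t : ℝ} (ht0 : 0 ≤ t) (htα : t ≤ α) :
    Real.exp (-(t / (1 - α))) ≤ 1 - t := by
  have h1α : 0 < 1 - α := by linarith
  have hx := Real.add_one_le_exp (t / (1 - α))
  have hpos := Real.exp_pos (t / (1 - α))
  have key : 1 ≤ (1 - t) * Real.exp (t / (1 - α)) := by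
    have h2 : 1 ≤ (1 - t) * (t / (1 - α) + 1) := by
      have hexp : (1 - t) * (t / (1 - α) + 1) - 1 = t * (α - t) / (1 - α) := by
        field_simp
        ring
      have hnn : 0 ≤ t * (α - t) / (1 - α) :=
        div_nonneg (mul_nonneg ht0 (by linarith)) h1α.le
      linarith
    calc (1:ℝ) ≤ (1 - t) * (t / (1 - α) + 1) := h2
    _ ≤ (1 - t) * Real.exp (t / (1 - α)) := by
        apply mul_le_mul_of_nonneg_left hx (by linarith)
  rw [Real.exp_neg, inv_eq_one_div, div_le_iff₀ hpos]
  linarith [key]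

lemma D_ge (hα0 : 0 < α) (hα1 : α < 1) (k : ℕ) : Ebnd α ≤ D α k := by
  have h1α : 0 < 1 - α := by linarith
  have step1 : ∏ l ∈ Finset.range k, Real.exp (-(α ^ (l + 1) / (1 - α))) ≤ D α k := by
    apply Finset.prod_le_prod
    · intro l _; exact (Real.exp_pos _).le
    · intro l _
      refine exp_le_one_sub hα0 hα1 (pow_pos hα0 _).le ?_
      calc α ^ (l + 1) ≤ α ^ 1 := pow_le_pow_of_le_one hα0.le hα1.le (by omega)
        _ = α := pow_one α
  have step2 : Ebnd α ≤ ∏ l ∈ Finset.range k, Real.exp (-(α ^ (l + 1) / (1 - α))) := by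
    rw [← Real.exp_sum]
    apply Real.exp_le_exp.2
    have hsum : ∑ l ∈ Finset.range k, α ^ (l + 1) ≤ α / (1 - α) := by
      have hgeo : ∑ l ∈ Finset.range k, α ^ l ≤ (1 - α)⁻¹ := by
        have := Summable.sum_le_tsum (Finset.range k) (fun l _ => (pow_pos hα0 l).le)
          (summable_geometric_of_lt_one hα0.le hα1)
        rwa [tsum_geometric_of_lt_one hα0.le hα1] at this
      calc ∑ l ∈ Finset.range k, α ^ (l + 1) = α * ∑ l ∈ Finset.range k, α ^ l := by
            rw [Finset.mul_sum]; congr 1; ext l; rw [pow_succ, mul_comm]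
        _ ≤ α * (1 - α)⁻¹ := by
            apply mul_le_mul_of_nonneg_left hgeo hα0.le
        _ = α / (1 - α) := by rw [div_eq_mul_inv]
    have heq : ∑ l ∈ Finset.range k, -(α ^ (l + 1) / (1 - α))
        = -((∑ l ∈ Finset.range k, α ^ (l + 1)) / (1 - α)) := by
      rw [Finset.sum_neg_distrib, ← Finset.sum_div]
    rw [heq, div_mul_eq_div_div_swap, neg_le_neg_iff]
    gcongr
  exact step2.trans step1

/-- the general term of the series defining `p_r`, with parameter `c` -/
noncomputable def term (α c : ℝ) (r m : ℕ) : ℝ :=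
  (-1 : ℝ) ^ m * ((m + r).choose r : ℝ) * c ^ (m + r) * α ^ (T (m + r)) / D α (m + r)

lemma choose_le_two_pow (n r : ℕ) : ((n.choose r : ℕ) : ℝ) ≤ 2 ^ n := by
  by_cases h : r ≤ n
  · have : n.choose r ≤ 2 ^ n := by
      calc n.choose r ≤ ∑ i ∈ Finset.range (n + 1), n.choose i :=
            Finset.single_le_sum (f := fun i => n.choose i) (fun _ _ => Nat.zero_le _)
              (Finset.mem_range.2 (Nat.lt_succ_of_le h))
        _ = 2 ^ n := Nat.sum_range_choose n
    exact_mod_cast this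
  · rw [Nat.choose_eq_zero_of_lt (by omega)]
    simp only [Nat.cast_zero]
    positivity

lemma abs_term_le (hα0 : 0 < α) (hα1 : α < 1) {c : ℝ} (hc : 0 ≤ c) (r m : ℕ) :
    |term α c r m| ≤ (2 * c) ^ (m + r) * α ^ (T (m + r)) / Ebnd α := by
  have hD := D_pos hα0 hα1 (m + r)
  have hE := Ebnd_pos α
  have habs : |term α c r m|
      = ((m + r).choose r : ℝ) * c ^ (m + r) * α ^ (T (m + r)) / D α (m + r) := by
    rw [term, abs_div, abs_of_pos hD, abs_mul, abs_mul, abs_mul, abs_pow, abs_neg, abs_one,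
      one_pow, one_mul, abs_of_nonneg (by positivity : (0:ℝ) ≤ ((m + r).choose r : ℝ)),
      abs_of_nonneg (by positivity : (0:ℝ) ≤ c ^ (m + r)),
      abs_of_nonneg (by positivity : (0:ℝ) ≤ α ^ (T (m + r)))]
  rw [habs]
  have hnum : ((m + r).choose r : ℝ) * c ^ (m + r) * α ^ (T (m + r))
      ≤ (2 * c) ^ (m + r) * α ^ (T (m + r)) := by
    rw [mul_pow]
    apply mul_le_mul_of_nonneg_right _ (by positivity)
    apply mul_le_mul_of_nonneg_right (choose_le_two_pow _ _) (by positivity)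
  calc ((m + r).choose r : ℝ) * c ^ (m + r) * α ^ (T (m + r)) / D α (m + r)
      ≤ ((m + r).choose r : ℝ) * c ^ (m + r) * α ^ (T (m + r)) / Ebnd α := by
        apply div_le_div_of_nonneg_left (by positivity) hE (D_ge hα0 hα1 _)
    _ ≤ (2 * c) ^ (m + r) * α ^ (T (m + r)) / Ebnd α := by
        apply div_le_div_of_nonneg_right hnum hE.le

lemma abs_term_le' (hα0 : 0 < α) (hα1 : α < 1) {c b : ℝ} (hc : 0 ≤ c) (hcb : c ≤ b) (r m : ℕ) :
    |term α c r m| ≤ ((2 * c) ^ r * α ^ (T r) / Ebnd α) * ((2 * b) ^ m * α ^ (T m)) := by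
  have hE := Ebnd_pos α
  refine (abs_term_le hα0 hα1 hc r m).trans ?_
  have h1 : (2 * c) ^ (m + r) ≤ (2 * c) ^ r * (2 * b) ^ m := by
    rw [pow_add, mul_comm]
    apply mul_le_mul_of_nonneg_left _ (by positivity)
    exact pow_le_pow_left₀ (by linarith) (by linarith) m
  have h2 : α ^ (T (m + r)) ≤ α ^ (T r) * α ^ (T m) := by
    rw [T_add, pow_add, pow_add]
    calc α ^ (T m) * α ^ (T r) * α ^ (m * r)
        ≤ α ^ (T m) * α ^ (T r) * 1 := by
          apply mul_le_mul_of_nonneg_left (pow_le_one₀ hα0.le hα1.le) (by positivity)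
      _ = α ^ (T r) * α ^ (T m) := by ring
  calc (2 * c) ^ (m + r) * α ^ (T (m + r)) / Ebnd α
      ≤ ((2 * c) ^ r * (2 * b) ^ m) * (α ^ (T r) * α ^ (T m)) / Ebnd α := by
        apply div_le_div_of_nonneg_right _ hE.le
        have hb0 : (0:ℝ) ≤ b := le_trans hc hcb
        exact mul_le_mul h1 h2 (by positivity)
          (mul_nonneg (pow_nonneg (by linarith) _) (pow_nonneg (by linarith) _))
    _ = ((2 * c) ^ r * α ^ (T r) / Ebnd α) * ((2 * b) ^ m * α ^ (T m)) := by ring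

lemma summable_base (hα0 : 0 < α) (hα1 : α < 1) {b : ℝ} (hb : 0 ≤ b) :
    Summable (fun k => b ^ k * α ^ (T k)) := by
  apply summable_of_ratio_norm_eventually_le (r := 1/2) (by norm_num)
  have htend : Filter.Tendsto (fun k : ℕ => b * α ^ k) Filter.atTop (nhds 0) := by
    have := tendsto_pow_atTop_nhds_zero_of_lt_one hα0.le hα1
    simpa using this.const_mul b
  filter_upwards [htend.eventually_lt_const (by norm_num : (0:ℝ) < 1/2)] with k hk
  have h1 : (0:ℝ) ≤ b ^ k * α ^ (T k) := by positivity
  rw [Real.norm_eq_abs, Real.norm_eq_abs, abs_of_nonneg (by positivity),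
    abs_of_nonneg h1]
  have he : b ^ (k + 1) * α ^ (T (k + 1)) = (b * α ^ k) * (b ^ k * α ^ (T k)) := by
    rw [T_succ, pow_add, pow_succ]
    ring
  rw [he]
  exact mul_le_mul_of_nonneg_right hk.le h1

lemma summable_abs_term (hα0 : 0 < α) (hα1 : α < 1) {c : ℝ} (hc : 0 ≤ c) (r : ℕ) :
    Summable (fun m => |term α c r m|) := by
  apply Summable.of_nonneg_of_le (fun m => abs_nonneg _)
    (fun m => abs_term_le' hα0 hα1 hc le_rfl r m)
  exact (summable_base hα0 hα1 (by linarith : (0:ℝ) ≤ 2 * c)).mul_left _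

lemma summable_term (hα0 : 0 < α) (hα1 : α < 1) {c : ℝ} (hc : 0 ≤ c) (r : ℕ) :
    Summable (fun m => term α c r m) :=
  (summable_abs_term hα0 hα1 hc r).of_abs

/-- The coefficient `p_r` with parameter `c`. -/
noncomputable def A (α c : ℝ) (r : ℕ) : ℝ := ∑' m, term α c r m

/-- dominating constant -/
noncomputable def Mp (α b : ℝ) : ℝ := ∑' m, (2 * b) ^ m * α ^ (T m)

lemma Mp_nonneg (hα0 : 0 < α) {b : ℝ} (hb : 0 ≤ b) : 0 ≤ Mp α b :=
  tsum_nonneg (fun m => by positivity)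

lemma abs_A_le (hα0 : 0 < α) (hα1 : α < 1) {c b : ℝ} (hc : 0 ≤ c) (hcb : c ≤ b) (r : ℕ) :
    |A α c r| ≤ ((2 * c) ^ r * α ^ (T r) / Ebnd α) * Mp α b := by
  have h1 : |A α c r| ≤ ∑' m, |term α c r m| := by
    simpa [A] using norm_tsum_le_tsum_norm (f := fun m => term α c r m)
      (by simpa using summable_abs_term hα0 hα1 hc r)
  refine h1.trans ?_
  have hb0 : (0:ℝ) ≤ b := le_trans hc hcb
  calc (∑' m, |term α c r m|)
      ≤ ∑' m, ((2 * c) ^ r * α ^ (T r) / Ebnd α) * ((2 * b) ^ m * α ^ (T m)) := by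
        apply Summable.tsum_le_tsum (fun m => abs_term_le' hα0 hα1 hc hcb r m)
          (summable_abs_term hα0 hα1 hc r)
          ((summable_base hα0 hα1 (by linarith : (0:ℝ) ≤ 2 * b)).mul_left _)
    _ = ((2 * c) ^ r * α ^ (T r) / Ebnd α) * Mp α b := by
        rw [tsum_mul_left, Mp]

lemma cd_helper {Dm f : ℝ} (hf : f ≠ 0) (c x : ℝ) :
    c * (x / Dm) = c * x * f / (Dm * f) := by
  rw [mul_div_assoc']
  exact (mul_div_mul_right _ _ hf).symm

lemma term_claim_zero (hα0 : 0 < α) (hα1 : α < 1) (c : ℝ) (m : ℕ) :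
    term α c 0 (m + 1) = term α (c * α) 0 (m + 1) - c * term α (c * α) 0 m := by
  have hfac : 0 < 1 - α ^ (m + 1) := by
    have : α ^ (m + 1) < 1 := pow_lt_one₀ hα0.le hα1 (Nat.succ_ne_zero m)
    linarith
  simp only [term, Nat.add_zero, Nat.choose_zero_right, Nat.cast_one]
  rw [cd_helper hfac.ne', ← D_succ, div_sub_div_same]
  congr 1
  rw [T_succ]
  ring

lemma term_claim_succ_zero (hα0 : 0 < α) (hα1 : α < 1) (c : ℝ) (r : ℕ) :
    term α c (r + 1) 0 = term α (c * α) (r + 1) 0 + c * term α (c * α) r 0 := by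
  have hfac : 0 < 1 - α ^ (r + 1) := by
    have : α ^ (r + 1) < 1 := pow_lt_one₀ hα0.le hα1 (Nat.succ_ne_zero r)
    linarith
  simp only [term, Nat.zero_add, Nat.choose_self, Nat.cast_one]
  rw [cd_helper hfac.ne', ← D_succ, ← add_div]
  congr 1
  rw [T_succ]
  ring

lemma term_claim_succ_succ (hα0 : 0 < α) (hα1 : α < 1) (c : ℝ) (r m : ℕ) :
    term α c (r + 1) (m + 1) = term α (c * α) (r + 1) (m + 1)
      + c * term α (c * α) r (m + 1) - c * term α (c * α) (r + 1) m := by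
  have e1 : m + 1 + (r + 1) = m + r + 1 + 1 := by omega
  have e2 : m + 1 + r = m + r + 1 := by omega
  have e3 : m + (r + 1) = m + r + 1 := by omega
  have hfac : 0 < 1 - α ^ (m + r + 1 + 1) := by
    have : α ^ (m + r + 1 + 1) < 1 := pow_lt_one₀ hα0.le hα1 (Nat.succ_ne_zero _)
    linarith
  have hpascal : (((m + r + 1 + 1).choose (r + 1) : ℕ) : ℝ)
      = ((m + r + 1).choose r : ℝ) + ((m + r + 1).choose (r + 1) : ℝ) := by
    rw [Nat.choose_succ_succ (m + r + 1) r]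
    push_cast
    ring
  simp only [term, e1, e2, e3]
  rw [cd_helper hfac.ne', cd_helper hfac.ne', ← D_succ, ← add_div, div_sub_div_same]
  congr 1
  rw [hpascal, T_succ]
  ring

lemma A_rec_zero (hα0 : 0 < α) (hα1 : α < 1) {c : ℝ} (hc : 0 ≤ c) :
    A α c 0 = (1 - c) * A α (c * α) 0 := by
  have hca : 0 ≤ c * α := mul_nonneg hc hα0.le
  have ht := summable_term hα0 hα1 hc 0
  have hu := summable_term hα0 hα1 hca 0
  have hu1 : Summable (fun m => term α (c * α) 0 (m + 1)) := (summable_nat_add_iff 1).mpr hu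
  have hv : Summable (fun m => c * term α (c * α) 0 m) := hu.mul_left c
  have h00 : term α c 0 0 = term α (c * α) 0 0 := by simp [term, T, D]
  calc A α c 0 = term α c 0 0 + ∑' m, term α c 0 (m + 1) := Summable.tsum_eq_zero_add ht
    _ = term α (c * α) 0 0
        + ∑' m, (term α (c * α) 0 (m + 1) - c * term α (c * α) 0 m) := by
        rw [h00]
        congr 1
        exact tsum_congr (fun m => term_claim_zero hα0 hα1 c m)
    _ = term α (c * α) 0 0 + (∑' m, term α (c * α) 0 (m + 1)
        - ∑' m, c * term α (c * α) 0 m) := by rw [Summable.tsum_sub hu1 hv]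
    _ = (term α (c * α) 0 0 + ∑' m, term α (c * α) 0 (m + 1))
        - c * ∑' m, term α (c * α) 0 m := by rw [tsum_mul_left]; ring
    _ = (1 - c) * A α (c * α) 0 := by
        rw [← Summable.tsum_eq_zero_add hu]
        rw [A]
        ring

lemma A_rec_succ (hα0 : 0 < α) (hα1 : α < 1) {c : ℝ} (hc : 0 ≤ c) (r : ℕ) :
    A α c (r + 1) = (1 - c) * A α (c * α) (r + 1) + c * A α (c * α) r := by
  have hca : 0 ≤ c * α := mul_nonneg hc hα0.le
  have ht := summable_term hα0 hα1 hc (r + 1)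
  have hu := summable_term hα0 hα1 hca (r + 1)
  have hw0 := summable_term hα0 hα1 hca r
  have hu1 : Summable (fun m => term α (c * α) (r + 1) (m + 1)) :=
    (summable_nat_add_iff 1).mpr hu
  have hw1 : Summable (fun m => c * term α (c * α) r (m + 1)) :=
    ((summable_nat_add_iff 1).mpr hw0).mul_left c
  have hv : Summable (fun m => c * term α (c * α) (r + 1) m) := hu.mul_left c
  calc A α c (r + 1) = term α c (r + 1) 0 + ∑' m, term α c (r + 1) (m + 1) :=
        Summable.tsum_eq_zero_add ht
    _ = (term α (c * α) (r + 1) 0 + c * term α (c * α) r 0)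
        + ∑' m, (term α (c * α) (r + 1) (m + 1) + c * term α (c * α) r (m + 1)
          - c * term α (c * α) (r + 1) m) := by
        rw [term_claim_succ_zero hα0 hα1 c r]
        congr 1
        exact tsum_congr (fun m => term_claim_succ_succ hα0 hα1 c r m)
    _ = (term α (c * α) (r + 1) 0 + c * term α (c * α) r 0)
        + ((∑' m, term α (c * α) (r + 1) (m + 1) + ∑' m, c * term α (c * α) r (m + 1))
          - ∑' m, c * term α (c * α) (r + 1) m) := by
        rw [Summable.tsum_sub (hu1.add hw1) hv, Summable.tsum_add hu1 hw1]
    _ = ((term α (c * α) (r + 1) 0 + ∑' m, term α (c * α) (r + 1) (m + 1))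
        + c * (term α (c * α) r 0 + ∑' m, term α (c * α) r (m + 1)))
        - c * ∑' m, term α (c * α) (r + 1) m := by
        rw [tsum_mul_left, tsum_mul_left]
        ring
    _ = (1 - c) * A α (c * α) (r + 1) + c * A α (c * α) r := by
        rw [← Summable.tsum_eq_zero_add hu, ← Summable.tsum_eq_zero_add hw0]
        rw [A, A]
        ring

lemma abs_A_zero_sub_one (hα0 : 0 < α) (hα1 : α < 1) {c b : ℝ} (hc : 0 ≤ c) (hcb : c ≤ b) :
    |A α c 0 - 1| ≤ 2 * Mp α b / Ebnd α * c := by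
  have hE := Ebnd_pos α
  have hb0 : (0:ℝ) ≤ b := le_trans hc hcb
  have ht := summable_term hα0 hα1 hc 0
  have ht1 : Summable (fun m => term α c 0 (m + 1)) := (summable_nat_add_iff 1).mpr ht
  have h0 : term α c 0 0 = 1 := by simp [term, T, D]
  have expand : A α c 0 - 1 = ∑' m, term α c 0 (m + 1) := by
    rw [A, Summable.tsum_eq_zero_add ht, h0]
    ring
  have hbound : ∀ m, |term α c 0 (m + 1)| ≤ 2 * c / Ebnd α * ((2 * b) ^ m * α ^ (T m)) := by
    intro m
    have h1 := abs_term_le hα0 hα1 hc 0 (m + 1)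
    simp only [Nat.add_zero] at h1
    refine h1.trans ?_
    rw [mul_comm (2 * c / Ebnd α) _, mul_div_assoc']
    apply div_le_div_of_nonneg_right _ hE.le
    rw [mul_comm _ (2 * c)]
    have e1 : (2 * c) ^ (m + 1) ≤ 2 * c * (2 * b) ^ m := by
      rw [pow_succ, mul_comm]
      apply mul_le_mul_of_nonneg_left _ (by linarith)
      exact pow_le_pow_left₀ (by linarith) (by linarith) m
    have e2 : α ^ (T (m + 1)) ≤ α ^ (T m) := by
      rw [T_succ, pow_add]
      calc α ^ (T m) * α ^ m ≤ α ^ (T m) * 1 :=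
            mul_le_mul_of_nonneg_left (pow_le_one₀ hα0.le hα1.le) (by positivity)
        _ = α ^ (T m) := mul_one _
    calc (2 * c) ^ (m + 1) * α ^ (T (m + 1))
        ≤ (2 * c * (2 * b) ^ m) * α ^ (T m) :=
          mul_le_mul e1 e2 (by positivity) (by positivity)
      _ = 2 * c * ((2 * b) ^ m * α ^ (T m)) := by ring
  have hgsum : Summable (fun m => 2 * c / Ebnd α * ((2 * b) ^ m * α ^ (T m))) :=
    (summable_base hα0 hα1 (by linarith : (0:ℝ) ≤ 2 * b)).mul_left _
  calc |A α c 0 - 1| = |∑' m, term α c 0 (m + 1)| := by rw [expand]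
    _ ≤ ∑' m, |term α c 0 (m + 1)| := by
        simpa using norm_tsum_le_tsum_norm (f := fun m => term α c 0 (m + 1))
          (by simpa using ht1.abs)
    _ ≤ ∑' m, 2 * c / Ebnd α * ((2 * b) ^ m * α ^ (T m)) :=
        Summable.tsum_le_tsum hbound ht1.abs hgsum
    _ = 2 * c / Ebnd α * Mp α b := by rw [tsum_mul_left, Mp]
    _ = 2 * Mp α b / Ebnd α * c := by ring

lemma factor_pos (hα0 : 0 < α) (hα1 : α < 1) {c : ℝ} (hc : 0 ≤ c) (hc1 : c < 1) (i : ℕ) :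
    0 < 1 - c * α ^ i := by
  have h1 : c * α ^ i ≤ c * 1 :=
    mul_le_mul_of_nonneg_left (pow_le_one₀ hα0.le hα1.le) hc
  nlinarith

lemma A_iter_zero (hα0 : 0 < α) (hα1 : α < 1) {c : ℝ} (hc : 0 ≤ c) :
    ∀ n, A α c 0 = (∏ i ∈ Finset.range n, (1 - c * α ^ i)) * A α (c * α ^ n) 0 := by
  intro n
  induction n with
  | zero => simp
  | succ n ih =>
    have hc' : 0 ≤ c * α ^ n := by positivity
    rw [ih, A_rec_zero hα0 hα1 hc', Finset.prod_range_succ]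
    have e : c * α ^ n * α = c * α ^ (n + 1) := by rw [pow_succ]; ring
    rw [e]
    ring

lemma A_iter_succ (hα0 : 0 < α) (hα1 : α < 1) {p : ℝ} (hp0 : 0 < p) (hp1 : p < 1) (r : ℕ)
    (hprev : ∀ c : ℝ, 0 ≤ c → c ≤ p → 0 ≤ A α c r)
    {c : ℝ} (hc : 0 ≤ c) (hcp : c ≤ p) :
    ∀ n, (∏ i ∈ Finset.range n, (1 - c * α ^ i)) * A α (c * α ^ n) (r + 1) ≤ A α c (r + 1) := by
  intro n
  induction n with
  | zero => simp
  | succ n ih =>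
    have hc' : 0 ≤ c * α ^ n := by positivity
    have hcp' : c * α ^ (n + 1) ≤ p := by
      calc c * α ^ (n + 1) ≤ c * 1 :=
            mul_le_mul_of_nonneg_left (pow_le_one₀ hα0.le hα1.le) hc
        _ = c := mul_one c
        _ ≤ p := hcp
    have hprod : 0 ≤ ∏ i ∈ Finset.range n, (1 - c * α ^ i) :=
      Finset.prod_nonneg fun i _ =>
        (factor_pos hα0 hα1 hc (lt_of_le_of_lt hcp hp1) i).le
    have hstep : (1 - c * α ^ n) * A α (c * α ^ (n + 1)) (r + 1)
        ≤ A α (c * α ^ n) (r + 1) := by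
      have hrec := A_rec_succ hα0 hα1 hc' r
      have e : c * α ^ n * α = c * α ^ (n + 1) := by rw [pow_succ]; ring
      rw [hrec, e]
      have h2 : 0 ≤ c * α ^ n * A α (c * α ^ (n + 1)) r :=
        mul_nonneg hc' (hprev _ (by positivity) hcp')
      nlinarith [h2]
    calc (∏ i ∈ Finset.range (n + 1), (1 - c * α ^ i)) * A α (c * α ^ (n + 1)) (r + 1)
        = (∏ i ∈ Finset.range n, (1 - c * α ^ i))
          * ((1 - c * α ^ n) * A α (c * α ^ (n + 1)) (r + 1)) := by
          rw [Finset.prod_range_succ]; ring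
      _ ≤ (∏ i ∈ Finset.range n, (1 - c * α ^ i)) * A α (c * α ^ n) (r + 1) :=
          mul_le_mul_of_nonneg_left hstep hprod
      _ ≤ A α c (r + 1) := ih

lemma A_nonneg (hα0 : 0 < α) (hα1 : α < 1) {p : ℝ} (hp0 : 0 < p) (hp1 : p < 1) :
    ∀ r : ℕ, ∀ c : ℝ, 0 ≤ c → c ≤ p → 0 ≤ A α c r := by
  have hE := Ebnd_pos α
  have hMp : 0 ≤ Mp α p := Mp_nonneg hα0 hp0.le
  have htendα : Filter.Tendsto (fun n : ℕ => α ^ n) Filter.atTop (nhds 0) :=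
    tendsto_pow_atTop_nhds_zero_of_lt_one hα0.le hα1
  intro r
  induction r with
  | zero =>
    intro c hc hcp
    set C0 : ℝ := 2 * Mp α p / Ebnd α with hC0
    have hC0nn : 0 ≤ C0 := by positivity
    have hev : ∀ᶠ n : ℕ in Filter.atTop, C0 * p * α ^ n < 1/2 := by
      have h := Filter.Tendsto.eventually_lt_const
        (show C0 * p * 0 < 1/2 by norm_num) (htendα.const_mul (C0 * p))
      exact h
    obtain ⟨n, hn⟩ := hev.exists
    have hc' : 0 ≤ c * α ^ n := by positivity
    have hcp' : c * α ^ n ≤ p := by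
      calc c * α ^ n ≤ c * 1 :=
            mul_le_mul_of_nonneg_left (pow_le_one₀ hα0.le hα1.le) hc
        _ = c := mul_one c
        _ ≤ p := hcp
    have hA1 : |A α (c * α ^ n) 0 - 1| ≤ 1/2 := by
      refine (abs_A_zero_sub_one hα0 hα1 hc' hcp').trans ?_
      calc 2 * Mp α p / Ebnd α * (c * α ^ n) = C0 * (c * α ^ n) := by rw [hC0]
        _ ≤ C0 * (p * α ^ n) := by
            apply mul_le_mul_of_nonneg_left _ hC0nn
            exact mul_le_mul_of_nonneg_right hcp (by positivity)
        _ = C0 * p * α ^ n := by ring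
        _ ≤ 1/2 := hn.le
    have hApos : 0 ≤ A α (c * α ^ n) 0 := by
      have := abs_le.1 hA1
      linarith [this.1]
    rw [A_iter_zero hα0 hα1 hc n]
    exact mul_nonneg (Finset.prod_nonneg fun i _ =>
      (factor_pos hα0 hα1 hc (lt_of_le_of_lt hcp hp1) i).le) hApos
  | succ r ih =>
    intro c hc hcp
    set B : ℝ := (2 * p) ^ (r + 1) * α ^ (T (r + 1)) / Ebnd α * Mp α p with hB
    have hBnn : 0 ≤ B := by positivity
    have key : ∀ n : ℕ, -(B * α ^ n) ≤ A α c (r + 1) := by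
      intro n
      have hc' : 0 ≤ c * α ^ n := by positivity
      have hcp' : c * α ^ n ≤ p := by
        calc c * α ^ n ≤ c * 1 :=
              mul_le_mul_of_nonneg_left (pow_le_one₀ hα0.le hα1.le) hc
          _ = c := mul_one c
          _ ≤ p := hcp
      have hAbd : |A α (c * α ^ n) (r + 1)| ≤ B * α ^ n := by
        refine (abs_A_le hα0 hα1 hc' hcp' (r + 1)).trans ?_
        have h1 : (2 * (c * α ^ n)) ^ (r + 1) ≤ (2 * p) ^ (r + 1) * α ^ n := by
          have e : (2 * (c * α ^ n)) ^ (r + 1) = (2 * c) ^ (r + 1) * (α ^ n) ^ (r + 1) := by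
            rw [← mul_pow]; ring_nf
          rw [e]
          have h2 : (2 * c) ^ (r + 1) ≤ (2 * p) ^ (r + 1) :=
            pow_le_pow_left₀ (by linarith) (by linarith) _
          have h3 : (α ^ n) ^ (r + 1) ≤ α ^ n := by
            calc (α ^ n) ^ (r + 1) ≤ (α ^ n) ^ 1 :=
                  pow_le_pow_of_le_one (by positivity) (pow_le_one₀ hα0.le hα1.le) (by omega)
              _ = α ^ n := pow_one _
          exact mul_le_mul h2 h3 (by positivity) (by positivity)
        calc (2 * (c * α ^ n)) ^ (r + 1) * α ^ (T (r + 1)) / Ebnd α * Mp α p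
            ≤ (2 * p) ^ (r + 1) * α ^ n * α ^ (T (r + 1)) / Ebnd α * Mp α p := by
              apply mul_le_mul_of_nonneg_right _ hMp
              apply div_le_div_of_nonneg_right _ hE.le
              exact mul_le_mul_of_nonneg_right h1 (by positivity)
          _ = B * α ^ n := by rw [hB]; ring
      have hprod0 : 0 ≤ ∏ i ∈ Finset.range n, (1 - c * α ^ i) :=
        Finset.prod_nonneg fun i _ =>
          (factor_pos hα0 hα1 hc (lt_of_le_of_lt hcp hp1) i).le
      have hprod1 : (∏ i ∈ Finset.range n, (1 - c * α ^ i)) ≤ 1 :=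
        Finset.prod_le_one (fun i _ =>
          (factor_pos hα0 hα1 hc (lt_of_le_of_lt hcp hp1) i).le)
          (fun i _ => by nlinarith [mul_nonneg hc (pow_nonneg hα0.le i)])
      have h4 : -(B * α ^ n) ≤ (∏ i ∈ Finset.range n, (1 - c * α ^ i))
          * A α (c * α ^ n) (r + 1) := by
        have h5 : -(B * α ^ n) ≤ A α (c * α ^ n) (r + 1) := by
          have := abs_le.1 hAbd
          linarith [this.1]
        calc -(B * α ^ n) ≤ (∏ i ∈ Finset.range n, (1 - c * α ^ i)) * (-(B * α ^ n)) := by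
              have hx : (0:ℝ) ≤ B * α ^ n := by positivity
              nlinarith [mul_le_mul_of_nonneg_right hprod1 hx]
          _ ≤ (∏ i ∈ Finset.range n, (1 - c * α ^ i)) * A α (c * α ^ n) (r + 1) :=
              mul_le_mul_of_nonneg_left h5 hprod0
      exact h4.trans (A_iter_succ hα0 hα1 hp0 hp1 r ih hc hcp n)
    have htend : Filter.Tendsto (fun n : ℕ => -(B * α ^ n)) Filter.atTop (nhds 0) := by
      have := (htendα.const_mul B).neg
      simpa using this
    exact le_of_tendsto htend (Filter.Eventually.of_forall key)

lemma summable_S (hα0 : 0 < α) (hα1 : α < 1) {c b z : ℝ} (hc : 0 ≤ c) (hcb : c ≤ b)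
    (hz0 : 0 ≤ z) (hz1 : z ≤ 1) : Summable (fun r => A α c r * z ^ r) := by
  have hE := Ebnd_pos α
  have hb0 : (0:ℝ) ≤ b := le_trans hc hcb
  have hMp : 0 ≤ Mp α b := Mp_nonneg hα0 hb0
  apply Summable.of_abs
  refine Summable.of_nonneg_of_le (fun r => abs_nonneg _) ?_
    ((summable_base hα0 hα1 (by linarith : (0:ℝ) ≤ 2 * b)).mul_left (Mp α b / Ebnd α))
  intro r
  rw [abs_mul]
  have hbd : (0:ℝ) ≤ (2 * b) ^ r * α ^ (T r) / Ebnd α * Mp α b := by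
    apply mul_nonneg _ hMp
    apply div_nonneg _ hE.le
    exact mul_nonneg (pow_nonneg (by linarith) _) (pow_nonneg hα0.le _)
  have h1 : |A α c r| ≤ (2 * b) ^ r * α ^ (T r) / Ebnd α * Mp α b := by
    refine (abs_A_le hα0 hα1 hc hcb r).trans ?_
    apply mul_le_mul_of_nonneg_right _ hMp
    apply div_le_div_of_nonneg_right _ hE.le
    apply mul_le_mul_of_nonneg_right _ (pow_nonneg hα0.le _)
    exact pow_le_pow_left₀ (by linarith) (by linarith) r
  have h2 : |z ^ r| ≤ 1 := by
    rw [abs_of_nonneg (pow_nonneg hz0 r)]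
    exact pow_le_one₀ hz0 hz1
  calc |A α c r| * |z ^ r| ≤ ((2 * b) ^ r * α ^ (T r) / Ebnd α * Mp α b) * 1 :=
        mul_le_mul h1 h2 (abs_nonneg _) hbd
    _ = Mp α b / Ebnd α * ((2 * b) ^ r * α ^ (T r)) := by ring

lemma S_rec (hα0 : 0 < α) (hα1 : α < 1) {c z : ℝ} (hc : 0 ≤ c) (hz0 : 0 ≤ z) (hz1 : z ≤ 1) :
    (∑' r, A α c r * z ^ r) = (1 - c * (1 - z)) * ∑' r, A α (c * α) r * z ^ r := by
  have hca : 0 ≤ c * α := mul_nonneg hc hα0.le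
  have hu : Summable (fun r => A α (c * α) r * z ^ r) :=
    summable_S hα0 hα1 hca le_rfl hz0 hz1
  have ht : Summable (fun r => A α c r * z ^ r) := summable_S hα0 hα1 hc le_rfl hz0 hz1
  have hu1 : Summable (fun r => A α (c * α) (r + 1) * z ^ (r + 1)) :=
    (summable_nat_add_iff 1).mpr hu
  calc (∑' r, A α c r * z ^ r)
      = A α c 0 * z ^ 0 + ∑' r, A α c (r + 1) * z ^ (r + 1) := Summable.tsum_eq_zero_add ht
    _ = (1 - c) * (A α (c * α) 0 * z ^ 0)
        + ∑' r, ((1 - c) * (A α (c * α) (r + 1) * z ^ (r + 1))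
          + (c * z) * (A α (c * α) r * z ^ r)) := by
        rw [A_rec_zero hα0 hα1 hc]
        congr 1
        · ring
        · apply tsum_congr
          intro r
          rw [A_rec_succ hα0 hα1 hc r, pow_succ]
          ring
    _ = (1 - c) * (A α (c * α) 0 * z ^ 0)
        + ((1 - c) * ∑' r, A α (c * α) (r + 1) * z ^ (r + 1)
          + (c * z) * ∑' r, A α (c * α) r * z ^ r) := by
        rw [Summable.tsum_add (hu1.mul_left _) (hu.mul_left _), tsum_mul_left, tsum_mul_left]
    _ = (1 - c) * (A α (c * α) 0 * z ^ 0 + ∑' r, A α (c * α) (r + 1) * z ^ (r + 1))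
        + (c * z) * ∑' r, A α (c * α) r * z ^ r := by ring
    _ = (1 - c * (1 - z)) * ∑' r, A α (c * α) r * z ^ r := by
        have hsplit : (∑' r, A α (c * α) r * z ^ r)
            = A α (c * α) 0 * z ^ 0 + ∑' r, A α (c * α) (r + 1) * z ^ (r + 1) :=
          Summable.tsum_eq_zero_add hu
        rw [hsplit]
        ring

lemma S_iter (hα0 : 0 < α) (hα1 : α < 1) {c z : ℝ} (hc : 0 ≤ c) (hz0 : 0 ≤ z) (hz1 : z ≤ 1) :
    ∀ n, (∑' r, A α c r * z ^ r)
      = (∏ i ∈ Finset.range n, (1 - c * α ^ i * (1 - z)))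
        * ∑' r, A α (c * α ^ n) r * z ^ r := by
  intro n
  induction n with
  | zero => simp
  | succ n ih =>
    have hc' : 0 ≤ c * α ^ n := by positivity
    rw [ih, S_rec hα0 hα1 hc' hz0 hz1, Finset.prod_range_succ]
    have e : c * α ^ n * α = c * α ^ (n + 1) := by rw [pow_succ]; ring
    rw [e]
    ring

lemma S_sub_one (hα0 : 0 < α) (hα1 : α < 1) {c b z : ℝ} (hc : 0 ≤ c) (hcb : c ≤ b)
    (hz0 : 0 ≤ z) (hz1 : z ≤ 1) :
    |(∑' r, A α c r * z ^ r) - 1| ≤ 2 * Mp α b / Ebnd α * (1 + Mp α b) * c := by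
  have hE := Ebnd_pos α
  have hb0 : (0:ℝ) ≤ b := le_trans hc hcb
  have hMp : 0 ≤ Mp α b := Mp_nonneg hα0 hb0
  have ht : Summable (fun r => A α c r * z ^ r) := summable_S hα0 hα1 hc hcb hz0 hz1
  have ht1 : Summable (fun r => A α c (r + 1) * z ^ (r + 1)) :=
    (summable_nat_add_iff 1).mpr ht
  have hbound : ∀ r, |A α c (r + 1) * z ^ (r + 1)|
      ≤ 2 * c * Mp α b / Ebnd α * ((2 * b) ^ r * α ^ (T r)) := by
    intro r
    rw [abs_mul]
    have h1 : |A α c (r + 1)| ≤ 2 * c * (2 * b) ^ r * α ^ (T r) / Ebnd α * Mp α b := by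
      refine (abs_A_le hα0 hα1 hc hcb (r + 1)).trans ?_
      apply mul_le_mul_of_nonneg_right _ hMp
      apply div_le_div_of_nonneg_right _ hE.le
      have e1 : (2 * c) ^ (r + 1) ≤ 2 * c * (2 * b) ^ r := by
        rw [pow_succ, mul_comm]
        apply mul_le_mul_of_nonneg_left _ (by linarith)
        exact pow_le_pow_left₀ (by linarith) (by linarith) r
      have e2 : α ^ (T (r + 1)) ≤ α ^ (T r) := by
        rw [T_succ, pow_add]
        calc α ^ (T r) * α ^ r ≤ α ^ (T r) * 1 :=
              mul_le_mul_of_nonneg_left (pow_le_one₀ hα0.le hα1.le) (by positivity)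
          _ = α ^ (T r) := mul_one _
      exact mul_le_mul e1 e2 (by positivity) (by positivity)
    have h2 : |z ^ (r + 1)| ≤ 1 := by
      rw [abs_of_nonneg (pow_nonneg hz0 _)]
      exact pow_le_one₀ hz0 hz1
    have hbd : (0:ℝ) ≤ 2 * c * (2 * b) ^ r * α ^ (T r) / Ebnd α * Mp α b := by
      apply mul_nonneg _ hMp
      apply div_nonneg _ hE.le
      apply mul_nonneg _ (pow_nonneg hα0.le _)
      exact mul_nonneg (by linarith) (pow_nonneg (by linarith) _)
    calc |A α c (r + 1)| * |z ^ (r + 1)|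
        ≤ (2 * c * (2 * b) ^ r * α ^ (T r) / Ebnd α * Mp α b) * 1 :=
          mul_le_mul h1 h2 (abs_nonneg _) hbd
      _ = 2 * c * Mp α b / Ebnd α * ((2 * b) ^ r * α ^ (T r)) := by ring
  have hgsum : Summable (fun r => 2 * c * Mp α b / Ebnd α * ((2 * b) ^ r * α ^ (T r))) :=
    (summable_base hα0 hα1 (by linarith : (0:ℝ) ≤ 2 * b)).mul_left _
  have expand : (∑' r, A α c r * z ^ r) - 1
      = (A α c 0 - 1) + ∑' r, A α c (r + 1) * z ^ (r + 1) := by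
    rw [Summable.tsum_eq_zero_add ht]
    ring
  have habs2 : |∑' r, A α c (r + 1) * z ^ (r + 1)| ≤ 2 * c * Mp α b / Ebnd α * Mp α b := by
    calc |∑' r, A α c (r + 1) * z ^ (r + 1)| ≤ ∑' r, |A α c (r + 1) * z ^ (r + 1)| := by
          simpa only [Real.norm_eq_abs] using
            norm_tsum_le_tsum_norm (f := fun r => A α c (r + 1) * z ^ (r + 1))
              (by simpa only [Real.norm_eq_abs] using ht1.abs)
      _ ≤ ∑' r, 2 * c * Mp α b / Ebnd α * ((2 * b) ^ r * α ^ (T r)) :=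
          Summable.tsum_le_tsum hbound ht1.abs hgsum
      _ = 2 * c * Mp α b / Ebnd α * Mp α b := by rw [tsum_mul_left, Mp]
  calc |(∑' r, A α c r * z ^ r) - 1|
      ≤ |A α c 0 - 1| + |∑' r, A α c (r + 1) * z ^ (r + 1)| := by
        rw [expand]; exact abs_add_le _ _
    _ ≤ 2 * Mp α b / Ebnd α * c + 2 * c * Mp α b / Ebnd α * Mp α b :=
        add_le_add (abs_A_zero_sub_one hα0 hα1 hc hcb) habs2
    _ = 2 * Mp α b / Ebnd α * (1 + Mp α b) * c := by ring

end Stmt10Aux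

open Stmt10Aux in
/-- Let `α, p ∈ (0,1)`. For `r ≥ 0` define
`p_r = ∑_{k=r}^∞ (−1)^{k−r} C(k,r) p^k α^{k(k−1)/2} / ∏_{l=1}^{k} (1 − α^l)`
(here indexed by `k = m + r`, `m ∈ ℕ`). Then each defining series converges absolutely,
`p_r ≥ 0`, `∑_r p_r = 1`, and `∑_r p_r z^r = ∏_{i=0}^∞ (1 − p α^i (1 − z))` for `z ∈ [0,1]`:
`(p_r)` is the marginal pmf of the stationary INAR(1) process with Bernoulli(p)
innovations. -/
theorem stmt_10 (α p : ℝ) (hα : α ∈ Set.Ioo (0 : ℝ) 1) (hp : p ∈ Set.Ioo (0 : ℝ) 1)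
    (pr : ℕ → ℝ)
    (hpr : ∀ r, pr r = ∑' m : ℕ,
      (-1 : ℝ) ^ m * ((m + r).choose r : ℝ) * p ^ (m + r)
        * α ^ ((m + r) * (m + r - 1) / 2)
        / ∏ l ∈ Finset.range (m + r), (1 - α ^ (l + 1))) :
    (∀ r, Summable fun m : ℕ =>
      |(-1 : ℝ) ^ m * ((m + r).choose r : ℝ) * p ^ (m + r)
        * α ^ ((m + r) * (m + r - 1) / 2)
        / ∏ l ∈ Finset.range (m + r), (1 - α ^ (l + 1))|) ∧
    (∀ r, 0 ≤ pr r) ∧ HasSum pr 1 ∧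
    (∀ z ∈ Set.Icc (0 : ℝ) 1,
      (∑' r : ℕ, pr r * z ^ r) = ∏' i : ℕ, (1 - p * α ^ i * (1 - z))) := by
  obtain ⟨hα0, hα1⟩ := hα
  obtain ⟨hp0, hp1⟩ := hp
  have hprA : ∀ r, pr r = A α p r := by
    intro r
    rw [hpr r]
    rfl
  have main : ∀ z ∈ Set.Icc (0:ℝ) 1,
      (∑' r, A α p r * z ^ r) = ∏' i : ℕ, (1 - p * α ^ i * (1 - z)) := by
    rintro z ⟨hz0, hz1⟩
    have hfpos : ∀ i : ℕ, 0 < 1 - p * α ^ i * (1 - z) := by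
      intro i
      have h1 : p * α ^ i * (1 - z) ≤ p * 1 * 1 := by
        apply mul_le_mul _ (by linarith) (by linarith) (by positivity)
        exact mul_le_mul_of_nonneg_left (pow_le_one₀ hα0.le hα1.le) hp0.le
      nlinarith
    have hfle1 : ∀ i : ℕ, 1 - p * α ^ i * (1 - z) ≤ 1 := by
      intro i
      have : 0 ≤ p * α ^ i * (1 - z) := by
        apply mul_nonneg (by positivity) (by linarith)
      linarith
    have hant : Antitone (fun s : Finset ℕ => ∏ i ∈ s, (1 - p * α ^ i * (1 - z))) := by
      intro s t hst
      have he : ∏ i ∈ t, (1 - p * α ^ i * (1 - z))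
          = (∏ i ∈ t \ s, (1 - p * α ^ i * (1 - z)))
            * ∏ i ∈ s, (1 - p * α ^ i * (1 - z)) := (Finset.prod_sdiff hst).symm
      simp only
      rw [he]
      calc (∏ i ∈ t \ s, (1 - p * α ^ i * (1 - z)))
            * ∏ i ∈ s, (1 - p * α ^ i * (1 - z))
          ≤ 1 * ∏ i ∈ s, (1 - p * α ^ i * (1 - z)) := by
            apply mul_le_mul_of_nonneg_right
              (Finset.prod_le_one (fun i _ => (hfpos i).le) (fun i _ => hfle1 i))
              (Finset.prod_nonneg fun i _ => (hfpos i).le)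
        _ = ∏ i ∈ s, (1 - p * α ^ i * (1 - z)) := one_mul _
    have hbdd : BddBelow (Set.range (fun s : Finset ℕ =>
        ∏ i ∈ s, (1 - p * α ^ i * (1 - z)))) := by
      refine ⟨0, ?_⟩
      rintro x ⟨s, rfl⟩
      exact Finset.prod_nonneg fun i _ => (hfpos i).le
    have hprodT : Filter.Tendsto (fun s : Finset ℕ => ∏ i ∈ s, (1 - p * α ^ i * (1 - z)))
        Filter.atTop
        (nhds (⨅ s : Finset ℕ, ∏ i ∈ s, (1 - p * α ^ i * (1 - z)))) :=
      tendsto_atTop_ciInf hant hbdd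
    have hHasProd : HasProd (fun i : ℕ => 1 - p * α ^ i * (1 - z))
        (⨅ s : Finset ℕ, ∏ i ∈ s, (1 - p * α ^ i * (1 - z))) := hprodT
    have hrange : Filter.Tendsto (fun n : ℕ => ∏ i ∈ Finset.range n, (1 - p * α ^ i * (1 - z)))
        Filter.atTop
        (nhds (⨅ s : Finset ℕ, ∏ i ∈ s, (1 - p * α ^ i * (1 - z)))) :=
      hprodT.comp tendsto_finset_range
    have hcp' : ∀ n : ℕ, p * α ^ n ≤ p := by
      intro n
      calc p * α ^ n ≤ p * 1 :=
            mul_le_mul_of_nonneg_left (pow_le_one₀ hα0.le hα1.le) hp0.le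
        _ = p := mul_one p
    have hS1 : Filter.Tendsto (fun n : ℕ => ∑' r, A α (p * α ^ n) r * z ^ r)
        Filter.atTop (nhds 1) := by
      set C : ℝ := 2 * Mp α p / Ebnd α * (1 + Mp α p) * p with hC
      have hsub : ∀ n : ℕ, |(∑' r, A α (p * α ^ n) r * z ^ r) - 1| ≤ C * α ^ n := by
        intro n
        have h := S_sub_one hα0 hα1 (c := p * α ^ n) (b := p) (by positivity) (hcp' n) hz0 hz1
        calc |(∑' r, A α (p * α ^ n) r * z ^ r) - 1|
            ≤ 2 * Mp α p / Ebnd α * (1 + Mp α p) * (p * α ^ n) := h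
          _ = C * α ^ n := by rw [hC]; ring
      have h0 : Filter.Tendsto (fun n : ℕ => C * α ^ n) Filter.atTop (nhds 0) := by
        have := (tendsto_pow_atTop_nhds_zero_of_lt_one hα0.le hα1).const_mul C
        simpa using this
      have hdiff : Filter.Tendsto (fun n : ℕ => (∑' r, A α (p * α ^ n) r * z ^ r) - 1)
          Filter.atTop (nhds 0) :=
        squeeze_zero_norm (fun n => by
          simpa only [Real.norm_eq_abs] using hsub n) h0
      have := hdiff.add_const 1
      simpa using this
    have hSn : ∀ n : ℕ, (∑' r, A α p r * z ^ r)
        = (∏ i ∈ Finset.range n, (1 - p * α ^ i * (1 - z)))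
          * ∑' r, A α (p * α ^ n) r * z ^ r :=
      S_iter hα0 hα1 hp0.le hz0 hz1
    have hev : ∀ᶠ n : ℕ in Filter.atTop, 1/2 < ∑' r, A α (p * α ^ n) r * z ^ r :=
      hS1.eventually_const_lt (by norm_num)
    have hPeq : ∀ᶠ n : ℕ in Filter.atTop,
        (∏ i ∈ Finset.range n, (1 - p * α ^ i * (1 - z)))
          = (∑' r, A α p r * z ^ r) * (∑' r, A α (p * α ^ n) r * z ^ r)⁻¹ := by
      filter_upwards [hev] with n hn
      have hne : (∑' r, A α (p * α ^ n) r * z ^ r) ≠ 0 :=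
        (lt_trans (by norm_num : (0:ℝ) < 1/2) hn).ne'
      rw [hSn n, mul_inv_cancel_right₀ hne]
    have htemp : Filter.Tendsto
        (fun n : ℕ => (∑' r, A α p r * z ^ r) * (∑' r, A α (p * α ^ n) r * z ^ r)⁻¹)
        Filter.atTop (nhds ((∑' r, A α p r * z ^ r) * (1:ℝ)⁻¹)) :=
      tendsto_const_nhds.mul (hS1.inv₀ one_ne_zero)
    have hPtend : Filter.Tendsto
        (fun n : ℕ => ∏ i ∈ Finset.range n, (1 - p * α ^ i * (1 - z)))
        Filter.atTop (nhds ((∑' r, A α p r * z ^ r) * (1:ℝ)⁻¹)) :=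
      Filter.Tendsto.congr' (Filter.EventuallyEq.symm (α := ℕ) (β := ℝ)
        (f := fun n : ℕ => ∏ i ∈ Finset.range n, (1 - p * α ^ i * (1 - z)))
        (g := fun n : ℕ => (∑' r, A α p r * z ^ r)
          * (∑' r, A α (p * α ^ n) r * z ^ r)⁻¹) (l := Filter.atTop) hPeq) htemp
    have huniq : (⨅ s : Finset ℕ, ∏ i ∈ s, (1 - p * α ^ i * (1 - z)))
        = (∑' r, A α p r * z ^ r) * (1:ℝ)⁻¹ :=
      tendsto_nhds_unique hrange hPtend
    rw [hHasProd.tprod_eq, huniq]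
    simp
  refine ⟨?_, ?_, ?_, ?_⟩
  · intro r
    exact summable_abs_term hα0 hα1 hp0.le r
  · intro r
    rw [hprA r]
    exact A_nonneg hα0 hα1 hp0 hp1 r p hp0.le le_rfl
  · have hsummableA : Summable (fun r => A α p r) := by
      have h := summable_S hα0 hα1 (c := p) (b := p) (z := 1) hp0.le le_rfl zero_le_one le_rfl
      simpa using h
    have hsum : Summable pr := hsummableA.congr (fun r => (hprA r).symm)
    have h1 : ∑' r, pr r = 1 := by
      have h := main 1 ⟨zero_le_one, le_rfl⟩
      simp only [one_pow, mul_one, sub_self, mul_zero, sub_zero, tprod_one] at h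
      calc ∑' r, pr r = ∑' r, A α p r := tsum_congr (fun r => hprA r)
        _ = 1 := h
    exact (Summable.hasSum_iff hsum).2 h1
  · intro z hz
    calc (∑' r : ℕ, pr r * z ^ r) = ∑' r, A α p r * z ^ r :=
          tsum_congr (fun r => by rw [hprA r])
      _ = ∏' i : ℕ, (1 - p * α ^ i * (1 - z)) := main z hz
end

section
/- Let α ∈ (0,1) and 0 < p < 1/2. Set λ = ∑_{n=1}^∞ p^n / (n (1 − α^n)) and, for n ≥ 1, a_n = ((−1)^{n+1}/λ) · ∑_{j=n}^∞ C(j,n) · p^j / (j (1 − α^j)). Then λ is finite and positive, ∑_{n=1}^∞ |a_n| < ∞, ∑_{n=1}^∞ a_n = 1, and for every z ∈ [0,1] the marginal pgf of the stationary INAR(1) process with Bernoulli(p) innovations satisfies ∏_{i=0}^∞ (1 − p α^i (1 − z)) = exp( λ ( ∑_{n=1}^∞ a_n z^n − 1 ) ); that is, the marginal distribution is discrete pseudo compound Poisson PCPD(λ, {a_n}). -/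
set_option maxHeartbeats 2000000


/-- Let `α ∈ (0,1)` and `0 < p < 1/2`. Set
`λ = ∑_{n=1}^∞ p^n/(n(1 − α^n))` and, for `n ≥ 1`,
`a_n = ((−1)^{n+1}/λ) ∑_{j=n}^∞ C(j,n) p^j/(j(1 − α^j))` (series indexed by `j = i + n`).
Then `λ` is finite and positive, `∑ |a_n| < ∞`, `∑ a_n = 1`, and for every `z ∈ [0,1]`,
`∏_{i=0}^∞ (1 − p α^i (1 − z)) = exp(λ(∑_{n=1}^∞ a_n z^n − 1))`: the marginal distribution
of the stationary INAR(1) process with Bernoulli(p) innovations is `PCPD(λ, {a_n})`. -/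
theorem stmt_14 (α p : ℝ) (hα : α ∈ Set.Ioo (0 : ℝ) 1) (hp : 0 < p) (hp2 : p < 1 / 2)
    (lam : ℝ)
    (hlam : HasSum (fun m : ℕ => p ^ (m + 1) / ((m + 1 : ℝ) * (1 - α ^ (m + 1)))) lam)
    (a : ℕ → ℝ)
    (ha : ∀ n : ℕ, 1 ≤ n → a n = ((-1 : ℝ) ^ (n + 1) / lam) *
      ∑' i : ℕ, ((i + n).choose n : ℝ) * p ^ (i + n) / ((i + n : ℝ) * (1 - α ^ (i + n)))) :
    0 < lam ∧
    (Summable fun m : ℕ => |a (m + 1)|) ∧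
    (∑' m : ℕ, a (m + 1)) = 1 ∧
    (∀ z ∈ Set.Icc (0 : ℝ) 1,
      (∏' i : ℕ, (1 - p * α ^ i * (1 - z))) =
        Real.exp (lam * ((∑' m : ℕ, a (m + 1) * z ^ (m + 1)) - 1))) := by
  obtain ⟨hα0, hα1⟩ := hα
  have hp1 : p < 1 := by linarith
  have h2p0 : (0:ℝ) ≤ 2 * p := by linarith
  have h2p : 2 * p < 1 := by linarith
  have hαle : ∀ n : ℕ, α ^ n ≤ 1 := fun n => pow_le_one₀ hα0.le hα1.le
  have hαlt : ∀ n : ℕ, α ^ (n + 1) < 1 := fun n => pow_lt_one₀ hα0.le hα1 (Nat.succ_ne_zero n)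
  set b : ℕ → ℝ := fun m : ℕ => p ^ (m + 1) / ((m + 1 : ℝ) * (1 - α ^ (m + 1))) with hbdef
  -- positivity of denominators (general form, for any nonzero exponent)
  have hden : ∀ k : ℕ, k ≠ 0 → 0 < (k : ℝ) * (1 - α ^ k) := by
    intro k hk
    have h1 : α ^ k < 1 := pow_lt_one₀ hα0.le hα1 hk
    have h2 : (0:ℝ) < (k : ℝ) := by
      have := Nat.pos_of_ne_zero hk
      exact_mod_cast this
    nlinarith
  have hb_pos : ∀ m : ℕ, 0 < b m := by
    intro m
    apply div_pos (pow_pos hp _)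
    have := hden (m + 1) (Nat.succ_ne_zero m)
    push_cast at this ⊢
    convert this using 2
  have hlam_pos : 0 < lam :=
    (hb_pos 0).trans_le (le_hasSum hlam 0 fun j _ => (hb_pos j).le)
  have hlam_ne : lam ≠ 0 := ne_of_gt hlam_pos
  -- the double-indexed family `g (m, i)` = term of the series defining `a (m+1)`
  set g : ℕ × ℕ → ℝ := fun q =>
    ((q.2 + (q.1 + 1)).choose (q.1 + 1) : ℝ) * p ^ (q.2 + (q.1 + 1)) /
      (((q.2 + (q.1 + 1) : ℕ) : ℝ) * (1 - α ^ (q.2 + (q.1 + 1)))) with hgdef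
  have ha' : ∀ m : ℕ, a (m + 1) = ((-1 : ℝ) ^ m / lam) * ∑' i : ℕ, g (m, i) := by
    intro m
    rw [ha (m + 1) (Nat.le_add_left 1 m)]
    have h1 : ((-1 : ℝ)) ^ (m + 1 + 1) = (-1) ^ m := by rw [pow_succ, pow_succ]; ring
    rw [h1]
    congr 1
    refine tsum_congr fun i => ?_
    simp only [hgdef]
    push_cast
    ring
  have hg_nonneg : ∀ q : ℕ × ℕ, 0 ≤ g q := by
    intro q
    apply div_nonneg
    · positivity
    · have := hden (q.2 + (q.1 + 1)) (by omega)
      exact this.le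
  have hchoose : ∀ j k : ℕ, (j.choose k : ℝ) ≤ 2 ^ j := by
    intro j k
    have h : j.choose k ≤ 2 ^ j := by
      rcases le_or_gt k j with h | h
      · calc j.choose k ≤ ∑ i ∈ Finset.range (j + 1), j.choose i :=
              Finset.single_le_sum (fun i _ => Nat.zero_le _) (Finset.mem_range.2 (by omega))
          _ = 2 ^ j := Nat.sum_range_choose j
      · simp [Nat.choose_eq_zero_of_lt h]
    exact_mod_cast h
  -- uniform bound giving summability of `g`
  have hg_le : ∀ q : ℕ × ℕ, g q ≤ (2 * p / (1 - α)) * ((2 * p) ^ q.1 * (2 * p) ^ q.2) := by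
    intro q
    set j := q.2 + (q.1 + 1) with hj
    have hj1 : 1 ≤ j := by omega
    have hd1 : (1:ℝ) ≤ (j : ℝ) := by exact_mod_cast hj1
    have hαj : α ^ j ≤ α := by
      calc α ^ j ≤ α ^ 1 := pow_le_pow_of_le_one hα0.le hα1.le hj1
        _ = α := pow_one α
    have hdd : 1 - α ≤ (j : ℝ) * (1 - α ^ j) := by nlinarith
    have hnum : (j.choose (q.1 + 1) : ℝ) * p ^ j ≤ (2 * p) ^ j := by
      rw [mul_pow]
      exact mul_le_mul_of_nonneg_right (hchoose j (q.1 + 1)) (pow_nonneg hp.le j)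
    have h1 : g q ≤ (2 * p) ^ j / (1 - α) := by
      simp only [hgdef, ← hj]
      exact div_le_div₀ (by positivity) hnum (by linarith) hdd
    have h2 : (2 * p) ^ j / (1 - α) = (2 * p / (1 - α)) * ((2 * p) ^ q.1 * (2 * p) ^ q.2) := by
      rw [hj, pow_add, pow_succ]
      ring
    linarith [h1, h2.le]
  have hgeo2p : Summable (fun i : ℕ => (2 * p) ^ i) := summable_geometric_of_lt_one h2p0 h2p
  have hBsum : Summable (fun q : ℕ × ℕ => (2 * p / (1 - α)) * ((2 * p) ^ q.1 * (2 * p) ^ q.2)) :=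
    (hgeo2p.mul_of_nonneg hgeo2p (fun i => by positivity) (fun i => by positivity)).mul_left _
  have hgsum : Summable g := Summable.of_nonneg_of_le hg_nonneg hg_le hBsum
  set S : ℕ → ℝ := fun m => ∑' i : ℕ, g (m, i) with hSdef
  have hS : ∀ m : ℕ, HasSum (fun i => g (m, i)) (S m) := fun m =>
    (hgsum.prod_factor m).hasSum
  have hS_nonneg : ∀ m : ℕ, 0 ≤ S m := fun m => tsum_nonneg fun i => hg_nonneg _
  have hSsum : HasSum S (∑' q, g q) := hgsum.hasSum.prod_fiberwise hS
  -- the key combinatorial identity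
  have key : ∀ z : ℝ, 0 ≤ z → z ≤ 1 → ∃ T : ℝ,
      HasSum (fun m => a (m + 1) * z ^ (m + 1)) (T / lam) ∧
      HasSum (fun n => b n * (1 - (1 - z) ^ (n + 1))) T := by
    intro z hz0 hz1
    set F : ℕ × ℕ → ℝ := fun q => (-1) ^ q.1 * z ^ (q.1 + 1) * g q with hFdef
    have hFabs : ∀ q, |F q| ≤ (2 * p / (1 - α)) * ((2 * p) ^ q.1 * (2 * p) ^ q.2) := by
      intro q
      have h1 : |F q| = z ^ (q.1 + 1) * g q := by
        rw [hFdef]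
        rw [abs_mul, abs_mul, abs_pow, abs_pow, abs_neg, abs_one, one_pow, one_mul,
          abs_of_nonneg hz0, abs_of_nonneg (hg_nonneg q)]
      rw [h1]
      calc z ^ (q.1 + 1) * g q ≤ 1 * g q :=
            mul_le_mul_of_nonneg_right (pow_le_one₀ hz0 hz1) (hg_nonneg q)
        _ = g q := one_mul _
        _ ≤ _ := hg_le q
    have hF : Summable F := by
      rw [← summable_abs_iff]
      exact Summable.of_nonneg_of_le (fun q => abs_nonneg _) hFabs hBsum
    refine ⟨∑' q, F q, ?_, ?_⟩
    · have h1 : HasSum (fun m => (-1) ^ m * z ^ (m + 1) * S m) (∑' q, F q) :=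
        hF.hasSum.prod_fiberwise fun m => (hS m).mul_left _
      have h2 := h1.div_const lam
      have h3 : (fun m => a (m + 1) * z ^ (m + 1)) =
          fun m => ((-1) ^ m * z ^ (m + 1) * S m) / lam := by
        funext m
        rw [ha' m]
        simp only [hSdef]
        ring
      rw [h3]
      exact h2
    · have hsig : HasSum (F ∘ ⇑(Finset.HasAntidiagonal.sigmaAntidiagonalEquivProd (A := ℕ))) (∑' q, F q) :=
        (Equiv.hasSum_iff _).2 hF.hasSum
      have h3 : HasSum (fun n => ∑ q ∈ Finset.HasAntidiagonal.antidiagonal n, F q) (∑' q, F q) :=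
        hsig.sigma fun n => (Finset.HasAntidiagonal.antidiagonal n).hasSum F
      have hterm : ∀ n : ℕ, ∑ q ∈ Finset.HasAntidiagonal.antidiagonal n, F q = b n * (1 - (1 - z) ^ (n + 1)) := by
        intro n
        rw [Finset.Nat.sum_antidiagonal_eq_sum_range_succ_mk]
        have hg' : ∀ k ∈ Finset.range (n + 1), F (k, n - k) =
            (p ^ (n + 1) / ((n + 1 : ℝ) * (1 - α ^ (n + 1)))) *
              (((n + 1).choose (k + 1) : ℝ) * ((-1) ^ k * z ^ (k + 1))) := by
          intro k hk
          have hkn : k ≤ n := Nat.lt_succ_iff.mp (Finset.mem_range.mp hk)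
          have hidx : n - k + (k + 1) = n + 1 := by omega
          simp only [hFdef, hgdef]
          rw [hidx]
          push_cast
          ring
        rw [Finset.sum_congr rfl hg', ← Finset.mul_sum]
        have hbinsum : ∑ k ∈ Finset.range (n + 1),
            (((n + 1).choose (k + 1) : ℝ) * ((-1) ^ k * z ^ (k + 1))) =
            1 - (1 - z) ^ (n + 1) := by
          have h5 : ∑ m ∈ Finset.range (n + 2), ((n + 1).choose m : ℝ) * (-z) ^ m =
              (1 - z) ^ (n + 1) := by
            have h6 := add_pow (-z) (1 : ℝ) (n + 1)
            rw [show (1:ℝ) - z = -z + 1 by ring, h6]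
            refine Finset.sum_congr rfl fun m _ => ?_
            ring
          have h4 := Finset.sum_range_succ' (fun m => ((n + 1).choose m : ℝ) * (-z) ^ m) (n + 1)
          -- h4 : ∑_{m ∈ range (n+2)} f m = ∑_{k ∈ range (n+1)} f (k+1) + f 0
          rw [h5] at h4
          have h7 : ∀ k : ℕ, ((n + 1).choose (k + 1) : ℝ) * (-z) ^ (k + 1) =
              -(((n + 1).choose (k + 1) : ℝ) * ((-1) ^ k * z ^ (k + 1))) := by
            intro k
            have : (-z) ^ (k + 1) = -((-1) ^ k * z ^ (k + 1)) := by
              rw [neg_pow, pow_succ]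
              ring
            rw [this]; ring
          simp only [h7] at h4
          rw [Finset.sum_neg_distrib] at h4
          simp only [Nat.choose_zero_right, Nat.cast_one, pow_zero, mul_one, one_mul] at h4
          linarith
        rw [hbinsum, hbdef]
      rw [funext hterm] at h3
      exact h3
  -- Part 3 : sum of a's is 1  (z = 1 in key)
  obtain ⟨T₁, hA1, hB1⟩ := key 1 zero_le_one le_rfl
  have hB1' : HasSum b T₁ := by
    have h : (fun n => b n * (1 - (1 - (1:ℝ)) ^ (n + 1))) = b := by
      funext n; simp
    rwa [h] at hB1
  have hT₁ : T₁ = lam := hB1'.unique hlam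
  have hA1' : HasSum (fun m => a (m + 1)) 1 := by
    have h : (fun m => a (m + 1) * (1:ℝ) ^ (m + 1)) = fun m => a (m + 1) := by
      funext m; simp
    rw [h] at hA1
    rw [hT₁, div_self hlam_ne] at hA1
    exact hA1
  -- Part 2 : summability of |a|
  have habs : ∀ m : ℕ, |a (m + 1)| = S m / lam := by
    intro m
    rw [ha' m]
    have h0 : (0:ℝ) ≤ ∑' i : ℕ, g (m, i) := tsum_nonneg fun i => hg_nonneg _
    rw [abs_mul, abs_div, abs_pow, abs_neg, abs_one, one_pow,
      abs_of_pos hlam_pos, abs_of_nonneg h0]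
    simp only [hSdef]
    ring
  have hsummable_abs : Summable fun m : ℕ => |a (m + 1)| := by
    simp only [habs]
    exact hSsum.summable.div_const lam
  refine ⟨hlam_pos, hsummable_abs, hA1'.tsum_eq, ?_⟩
  -- Part 4 : the infinite product identity
  intro z hz
  obtain ⟨hz0, hz1⟩ := hz
  obtain ⟨T, hA, hB⟩ := key z hz0 hz1
  set w : ℝ := 1 - z with hwdef
  have hw0 : 0 ≤ w := by simp [hwdef]; linarith
  have hw1 : w ≤ 1 := by simp [hwdef]; linarith
  have hsum_az : (∑' m : ℕ, a (m + 1) * z ^ (m + 1)) = T / lam := hA.tsum_eq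
  have hTlam : HasSum (fun n => b n * w ^ (n + 1)) (lam - T) := by
    have h1 := hlam.sub hB
    have h2 : (fun n => b n - b n * (1 - w ^ (n + 1))) = fun n => b n * w ^ (n + 1) := by
      funext n; ring
    rwa [h2] at h1
  -- the log series, double-indexed
  set H : ℕ × ℕ → ℝ := fun q => (p * w * α ^ q.1) ^ (q.2 + 1) / ((q.2 : ℝ) + 1) with hHdef
  have hx0 : ∀ i : ℕ, 0 ≤ p * w * α ^ i := fun i => by positivity
  have hwα : ∀ i : ℕ, w * α ^ i ≤ 1 := fun i =>
    mul_le_one₀ hw1 (pow_nonneg hα0.le i) (hαle i)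
  have hxp : ∀ i : ℕ, p * w * α ^ i ≤ p := by
    intro i
    have := mul_le_of_le_one_right hp.le (hwα i)
    calc p * w * α ^ i = p * (w * α ^ i) := by ring
      _ ≤ p := this
  have hx1 : ∀ i : ℕ, p * w * α ^ i < 1 := fun i => lt_of_le_of_lt (hxp i) (by linarith)
  have hpos : ∀ i : ℕ, 0 < 1 - p * w * α ^ i := fun i => by
    have := hxp i; linarith
  have hHfib1 : ∀ i : ℕ, HasSum (fun m => H (i, m)) (-Real.log (1 - p * w * α ^ i)) := by
    intro i
    have habs : |p * w * α ^ i| < 1 := by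
      rw [abs_of_nonneg (hx0 i)]; exact hx1 i
    exact Real.hasSum_pow_div_log_of_abs_lt_one habs
  have hHfib2 : ∀ m : ℕ, HasSum (fun i => H (i, m)) (b m * w ^ (m + 1)) := by
    intro m
    have hgeo := hasSum_geometric_of_lt_one (pow_nonneg hα0.le (m + 1)) (hαlt m)
    have h := hgeo.mul_left ((p * w) ^ (m + 1) / ((m : ℝ) + 1))
    have heq : (fun i : ℕ => (p * w) ^ (m + 1) / ((m : ℝ) + 1) * (α ^ (m + 1)) ^ i) =
        fun i => H (i, m) := by
      funext i
      simp only [hHdef]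
      rw [pow_right_comm α (m + 1) i, div_mul_eq_mul_div, ← mul_pow]
    rw [heq] at h
    have hval : (p * w) ^ (m + 1) / ((m : ℝ) + 1) * (1 - α ^ (m + 1))⁻¹ =
        b m * w ^ (m + 1) := by
      rw [hbdef, mul_pow]
      have hm1 : ((m : ℝ) + 1) ≠ 0 := by positivity
      have hα1' : (1 : ℝ) - α ^ (m + 1) ≠ 0 := by
        have := hαlt m; linarith
      field_simp
    rwa [hval] at h
  have hH_nonneg : ∀ q : ℕ × ℕ, 0 ≤ H q := fun q => by
    simp only [hHdef]; positivity
  have hH_le : ∀ q : ℕ × ℕ, H q ≤ α ^ q.1 * p ^ (q.2 + 1) := by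
    intro q
    have h1 : H q ≤ (p * w * α ^ q.1) ^ (q.2 + 1) := by
      simp only [hHdef]
      apply div_le_self (by positivity)
      have : (0:ℝ) ≤ (q.2 : ℝ) := Nat.cast_nonneg _
      linarith
    have h2 : (p * w * α ^ q.1) ^ (q.2 + 1) ≤ (p * α ^ q.1) ^ (q.2 + 1) := by
      apply pow_le_pow_left₀ (hx0 q.1)
      have : p * w ≤ p * 1 := mul_le_of_le_one_right hp.le hw1 |>.trans (le_of_eq (mul_one p).symm) |>.trans (le_of_eq rfl)
      nlinarith [pow_nonneg hα0.le q.1]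
    have h3 : (p * α ^ q.1) ^ (q.2 + 1) = p ^ (q.2 + 1) * (α ^ q.1) ^ (q.2 + 1) := mul_pow _ _ _
    have h4 : (α ^ q.1) ^ (q.2 + 1) ≤ α ^ q.1 :=
      pow_le_of_le_one (pow_nonneg hα0.le q.1) (hαle q.1) (Nat.succ_ne_zero q.2)
    calc H q ≤ (p * w * α ^ q.1) ^ (q.2 + 1) := h1
      _ ≤ (p * α ^ q.1) ^ (q.2 + 1) := h2
      _ = p ^ (q.2 + 1) * (α ^ q.1) ^ (q.2 + 1) := h3
      _ ≤ p ^ (q.2 + 1) * α ^ q.1 :=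
          mul_le_mul_of_nonneg_left h4 (pow_nonneg hp.le _)
      _ = α ^ q.1 * p ^ (q.2 + 1) := mul_comm _ _
  have hH : Summable H := by
    have hgα : Summable (fun i : ℕ => α ^ i) := summable_geometric_of_lt_one hα0.le hα1
    have hgp : Summable (fun m : ℕ => p ^ (m + 1)) := by
      have := (summable_geometric_of_lt_one hp.le hp1).mul_left p
      refine this.congr fun m => ?_
      rw [pow_succ]; ring
    exact Summable.of_nonneg_of_le hH_nonneg hH_le
      (hgα.mul_of_nonneg hgp (fun i => pow_nonneg hα0.le i) (fun m => pow_nonneg hp.le _))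
  have hU := hH.hasSum
  have hU1 : HasSum (fun i => -Real.log (1 - p * w * α ^ i)) (∑' q, H q) :=
    hU.prod_fiberwise hHfib1
  have hswap : HasSum (fun q : ℕ × ℕ => H (q.2, q.1)) (∑' q, H q) :=
    ((Equiv.prodComm ℕ ℕ).hasSum_iff).2 hU
  have hU2 : HasSum (fun m => b m * w ^ (m + 1)) (∑' q, H q) :=
    hswap.prod_fiberwise fun m => hHfib2 m
  have hUval : (∑' q, H q) = lam - T := hU2.unique hTlam
  have hlog : HasSum (fun i => Real.log (1 - p * w * α ^ i)) (T - lam) := by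
    have h := hU1.neg
    simp only [neg_neg] at h
    rwa [hUval, neg_sub] at h
  have hprod := hlog.rexp
  have hfun : (Real.exp ∘ fun i => Real.log (1 - p * w * α ^ i)) =
      fun i : ℕ => 1 - p * α ^ i * w := by
    funext i
    show Real.exp (Real.log (1 - p * w * α ^ i)) = 1 - p * α ^ i * w
    rw [Real.exp_log (hpos i)]
    ring
  rw [hfun] at hprod
  rw [hprod.tprod_eq, hsum_az]
  congr 1
  field_simp
end

section
/- Let α, q, c ∈ (0,1) and let m ≥ 1 be an integer. Let Ψ(z) = ∏_{j=0}^{m−1} (1 − c q^j (1 − z)) be the pgf of the Poissonian Binomial(m, q, c) distribution. Then the marginal pgf of the stationary INAR(1) process with Poissonian Binomial(m, q, c) innovations satisfies, for every z ∈ [0,1], ∏_{i=0}^∞ Ψ(1 − α^i + α^i z) = exp( − ∑_{n=1}^∞ ((1 − q^{m n})/(1 − q^n)) · c^n / (n (1 − α^n)) · (1 − z)^n ), the series in the exponent converging absolutely. -/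
open Real Finset

set_option maxHeartbeats 1000000 in
/-- Let `α, q, c ∈ (0,1)` and let `m ≥ 1` be an integer. Let
`Ψ(z) = ∏_{j=0}^{m−1} (1 − c q^j (1 − z))` be the pgf of the Poissonian Binomial(m, q, c)
distribution. Then the marginal pgf of the stationary INAR(1) process with these
innovations satisfies, for every `z ∈ [0,1]`,
`∏_{i=0}^∞ Ψ(1 − α^i + α^i z)
   = exp(− ∑_{n=1}^∞ ((1 − q^{m n})/(1 − q^n)) c^n / (n (1 − α^n)) (1 − z)^n)`,
the series in the exponent converging absolutely (indexed by `n = k + 1`, `k ∈ ℕ`). -/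
theorem stmt_18 (α q c : ℝ) (hα : α ∈ Set.Ioo (0 : ℝ) 1) (hq : q ∈ Set.Ioo (0 : ℝ) 1)
    (hc : c ∈ Set.Ioo (0 : ℝ) 1) (m : ℕ) (hm : 1 ≤ m)
    (Ψ : ℝ → ℝ) (hΨ : ∀ z, Ψ z = ∏ j ∈ Finset.range m, (1 - c * q ^ j * (1 - z))) :
    ∀ z ∈ Set.Icc (0 : ℝ) 1,
      (Summable fun k : ℕ =>
        |((1 - q ^ (m * (k + 1))) / (1 - q ^ (k + 1))) * c ^ (k + 1)
          / ((k + 1 : ℝ) * (1 - α ^ (k + 1))) * (1 - z) ^ (k + 1)|) ∧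
      (∏' i : ℕ, Ψ (1 - α ^ i + α ^ i * z)) =
        Real.exp (- ∑' k : ℕ,
          ((1 - q ^ (m * (k + 1))) / (1 - q ^ (k + 1))) * c ^ (k + 1)
            / ((k + 1 : ℝ) * (1 - α ^ (k + 1))) * (1 - z) ^ (k + 1)) := by
  obtain ⟨hα0, hα1⟩ := hα
  obtain ⟨hq0, hq1⟩ := hq
  obtain ⟨hc0, hc1⟩ := hc
  intro z hz
  obtain ⟨hz0, hz1⟩ := hz
  set w : ℝ := 1 - z with hw
  have hw0 : 0 ≤ w := by simp [hw]; linarith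
  have hw1 : w ≤ 1 := by simp [hw]; linarith
  -- basic bounds
  have hαpow : ∀ n : ℕ, 0 < α ^ n := fun n => pow_pos hα0 n
  have hαpow1 : ∀ n : ℕ, α ^ n ≤ 1 := fun n => pow_le_one₀ hα0.le hα1.le
  have hαpow1' : ∀ n : ℕ, α ^ (n + 1) < 1 := fun n => pow_lt_one₀ hα0.le hα1 (Nat.succ_ne_zero n)
  have hqpow1 : ∀ n : ℕ, q ^ n ≤ 1 := fun n => pow_le_one₀ hq0.le hq1.le
  have hqpow1' : ∀ n : ℕ, q ^ (n + 1) < 1 := fun n => pow_lt_one₀ hq0.le hq1 (Nat.succ_ne_zero n)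
  -- x i j
  set x : ℕ → ℕ → ℝ := fun i j => c * q ^ j * (α ^ i * w) with hxdef
  have hx0 : ∀ i j, 0 ≤ x i j := fun i j => by
    have := hαpow i
    positivity
  have hxc : ∀ i j, x i j ≤ c * α ^ i := by
    intro i j
    calc x i j ≤ c * q ^ j * (α ^ i * 1) := by
          apply mul_le_mul_of_nonneg_left (mul_le_mul_of_nonneg_left hw1 (hαpow i).le)
          positivity
      _ ≤ c * 1 * (α ^ i * 1) := by
          apply mul_le_mul_of_nonneg_right (mul_le_mul_of_nonneg_left (hqpow1 j) hc0.le)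
          positivity
      _ = c * α ^ i := by ring
  have hxlt : ∀ i j, x i j < 1 := by
    intro i j
    calc x i j ≤ c * α ^ i := hxc i j
      _ ≤ c * 1 := mul_le_mul_of_nonneg_left (hαpow1 i) hc0.le
      _ < 1 := by linarith
  -- h (k, i)
  set h : ℕ × ℕ → ℝ := fun p => ∑ j ∈ range m, (x p.2 j) ^ (p.1 + 1) / (p.1 + 1) with hhdef
  have hh0 : ∀ p, 0 ≤ h p := by
    intro p
    apply Finset.sum_nonneg
    intro j _
    have := hx0 p.2 j
    positivity
  -- C k
  set C : ℕ → ℝ := fun k => ∑ j ∈ range m, (c * q ^ j * w) ^ (k + 1) / (k + 1) with hCdef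
  have hC0 : ∀ k, 0 ≤ C k := by
    intro k
    apply Finset.sum_nonneg
    intro j _
    positivity
  have hCle : ∀ k, C k ≤ m * c ^ (k + 1) := by
    intro k
    calc C k ≤ ∑ j ∈ range m, c ^ (k + 1) := by
          apply Finset.sum_le_sum
          intro j _
          have h1 : (c * q ^ j * w) ^ (k + 1) ≤ c ^ (k + 1) := by
            apply pow_le_pow_left₀ (by positivity)
            calc c * q ^ j * w ≤ c * 1 * 1 := by
                  apply mul_le_mul (mul_le_mul_of_nonneg_left (hqpow1 j) hc0.le) hw1 hw0
                  positivity
              _ = c := by ring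
          calc (c * q ^ j * w) ^ (k + 1) / (k + 1) ≤ (c * q ^ j * w) ^ (k + 1) / 1 := by
                apply div_le_div_of_nonneg_left (by positivity) one_pos
                exact_mod_cast Nat.succ_le_succ (Nat.zero_le k)
            _ = (c * q ^ j * w) ^ (k + 1) := div_one _
            _ ≤ c ^ (k + 1) := h1
      _ = m * c ^ (k + 1) := by simp [Finset.sum_const, nsmul_eq_mul]
  -- h (k, i) = C k * (α^(k+1))^i
  have hhC : ∀ k i, h (k, i) = C k * (α ^ (k + 1)) ^ i := by
    intro k i
    simp only [hhdef, hCdef, Finset.sum_mul, Finset.sum_div]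
    apply Finset.sum_congr rfl
    intro j _
    have : (x i j) ^ (k + 1) = (c * q ^ j * w) ^ (k + 1) * (α ^ (k + 1)) ^ i := by
      rw [← pow_mul, mul_comm (k+1) i, pow_mul, ← mul_pow]
      simp only [hxdef]
      ring_nf
    rw [this]; ring
  -- T k: target term
  set T : ℕ → ℝ := fun k => ((1 - q ^ (m * (k + 1))) / (1 - q ^ (k + 1))) * c ^ (k + 1)
      / ((k + 1 : ℝ) * (1 - α ^ (k + 1))) * w ^ (k + 1) with hTdef
  have hTC : ∀ k, T k = C k * (1 - α ^ (k + 1))⁻¹ := by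
    intro k
    have hq1' : q ^ (k + 1) ≠ 1 := ne_of_lt (hqpow1' k)
    have hgs : ∑ j ∈ range m, (q ^ (k + 1)) ^ j = ((q ^ (k+1)) ^ m - 1) / (q ^ (k+1) - 1) :=
      geom_sum_eq hq1' m
    have hCk : C k = (1 - q ^ (m * (k+1))) / (1 - q ^ (k+1)) * (c ^ (k+1) * w ^ (k+1) / (k+1)) := by
      have hterm : ∀ j ∈ range m, (c * q ^ j * w) ^ (k + 1) / ((k : ℝ) + 1)
          = (q ^ (k+1)) ^ j * (c ^ (k+1) * w ^ (k+1) / (k+1)) := by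
        intro j _
        rw [mul_pow, mul_pow, ← pow_mul, mul_comm j (k+1), pow_mul]
        ring
      simp only [hCdef]
      rw [Finset.sum_congr rfl hterm, ← Finset.sum_mul, hgs]
      have hne : q ^ (k + 1) - 1 ≠ 0 := sub_ne_zero.mpr hq1'
      have hmm : (q ^ (k+1)) ^ m = q ^ (m * (k+1)) := by rw [← pow_mul, mul_comm]
      rw [hmm]
      congr 1
      rw [div_eq_div_iff hne (by intro hcon; apply hne; linarith)]
      ring
    simp only [hTdef]
    rw [hCk]
    have hne1 : (1 : ℝ) - α ^ (k+1) ≠ 0 := by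
      have := hαpow1' k; intro hcon; linarith
    have hne2 : ((k : ℝ) + 1) ≠ 0 := by positivity
    field_simp
  have hgeom : ∀ k, HasSum (fun i : ℕ => h (k, i)) (T k) := by
    intro k
    rw [hTC k, show (fun i : ℕ => h (k, i)) = fun i : ℕ => C k * (α ^ (k + 1)) ^ i from
      funext (hhC k)]
    exact (hasSum_geometric_of_lt_one (hαpow (k+1)).le (hαpow1' k)).mul_left _
  have hT0 : ∀ k, 0 ≤ T k := fun k => (hgeom k).nonneg fun i => hh0 (k, i)
  -- Summability of T
  have hTsum : Summable T := by
    apply Summable.of_nonneg_of_le hT0 (f := fun k => (m * (1 - α)⁻¹ * c) * c ^ k)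
    · intro k
      rw [hTC k]
      have hinv : (1 - α ^ (k + 1))⁻¹ ≤ (1 - α)⁻¹ := by
        apply inv_anti₀ (by linarith)
        have : α ^ (k + 1) ≤ α := by
          calc α ^ (k + 1) = α ^ k * α := by ring
            _ ≤ 1 * α := mul_le_mul_of_nonneg_right (hαpow1 k) hα0.le
            _ = α := one_mul α
        linarith
      calc C k * (1 - α ^ (k + 1))⁻¹ ≤ (m * c ^ (k + 1)) * (1 - α)⁻¹ := by
            apply mul_le_mul (hCle k) hinv (inv_nonneg.mpr (by linarith [hαpow1' k]))
              (by positivity)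
        _ = (m * (1 - α)⁻¹ * c) * c ^ k := by ring
    · exact (summable_geometric_of_lt_one hc0.le hc1).mul_left _
  -- summability of h
  have hhsum : Summable h := by
    rw [summable_prod_of_nonneg hh0]
    constructor
    · intro k; exact (hgeom k).summable
    · have : (fun k => ∑' i, h (k, i)) = T := funext fun k => (hgeom k).tsum_eq
      rw [this]; exact hTsum
  -- swapped summability
  have hhsum' : Summable (fun p : ℕ × ℕ => h (p.2, p.1)) := by
    have := hhsum.comp_injective (Equiv.prodComm ℕ ℕ).injective
    exact this
  obtain ⟨hslice, hsums⟩ := (summable_prod_of_nonneg (f := fun p : ℕ × ℕ => h (p.2, p.1))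
    (fun p => hh0 _)).mp hhsum'
  -- key tsum identity: ∑' i, ∑' k, h (k, i) = ∑' k, T k
  have hswap : ∑' (i : ℕ), ∑' (k : ℕ), h (k, i) = ∑' k, T k := by
    have h1 : ∑' (i : ℕ), ∑' (k : ℕ), h (k, i)
        = ∑' p : ℕ × ℕ, h (p.2, p.1) := (Summable.tsum_prod' hhsum' hslice).symm
    have h2 : ∑' p : ℕ × ℕ, h (p.2, p.1) = ∑' p : ℕ × ℕ, h p :=
      (Equiv.prodComm ℕ ℕ).tsum_eq h
    have h3 : ∑' p : ℕ × ℕ, h p = ∑' (k : ℕ), ∑' (i : ℕ), h (k, i) :=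
      Summable.tsum_prod' hhsum fun k => (hgeom k).summable
    have h4 : ∀ k, ∑' (i : ℕ), h (k, i) = T k := fun k => (hgeom k).tsum_eq
    rw [h1, h2, h3]
    exact tsum_congr h4
  have hSsum : HasSum (fun i => ∑' k, h (k, i)) (∑' k, T k) := by
    rw [← hswap]
    exact hsums.hasSum
  -- positivity and log of Ψ factors
  have hΨpos : ∀ i, 0 < Ψ (1 - α ^ i + α ^ i * z) := by
    intro i
    rw [hΨ]
    apply Finset.prod_pos
    intro j _
    have harg : 1 - (1 - α ^ i + α ^ i * z) = α ^ i * w := by rw [hw]; ring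
    rw [harg]
    have h2 : c * q ^ j * (α ^ i * w) < 1 := hxlt i j
    linarith
  have hΨlog : ∀ i, Real.log (Ψ (1 - α ^ i + α ^ i * z)) = -∑' k, h (k, i) := by
    intro i
    rw [hΨ]
    have hprodeq : ∏ j ∈ range m, (1 - c * q ^ j * (1 - (1 - α ^ i + α ^ i * z)))
        = ∏ j ∈ range m, (1 - x i j) := by
      apply Finset.prod_congr rfl
      intro j _
      simp only [hxdef]
      ring
    rw [hprodeq, Real.log_prod]
    · have hlog : ∀ j ∈ range m,
          Real.log (1 - x i j) = -(∑' k : ℕ, (x i j) ^ (k + 1) / ((k : ℝ) + 1)) := by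
        intro j _
        have habs : |x i j| < 1 := by rw [abs_of_nonneg (hx0 i j)]; exact hxlt i j
        have := (hasSum_pow_div_log_of_abs_lt_one habs).tsum_eq
        linarith [this]
      calc ∑ j ∈ range m, Real.log (1 - x i j)
          = ∑ j ∈ range m, -(∑' k : ℕ, (x i j) ^ (k + 1) / ((k : ℝ) + 1)) :=
            Finset.sum_congr rfl hlog
        _ = -∑ j ∈ range m, ∑' k : ℕ, (x i j) ^ (k + 1) / ((k : ℝ) + 1) := by
            rw [Finset.sum_neg_distrib]
        _ = -∑' k : ℕ, ∑ j ∈ range m, (x i j) ^ (k + 1) / ((k : ℝ) + 1) := by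
            rw [Summable.tsum_finsetSum]
            intro j _
            have habs : |x i j| < 1 := by rw [abs_of_nonneg (hx0 i j)]; exact hxlt i j
            exact (hasSum_pow_div_log_of_abs_lt_one habs).summable
        _ = -∑' k : ℕ, h (k, i) := rfl
    · intro j _
      intro hcon
      have h2 := hxlt i j
      have h3 : (1 : ℝ) = x i j := sub_eq_zero.mp hcon
      linarith
  -- final assembly
  constructor
  · exact hTsum.abs
  · have hlogsum : HasSum (fun i => Real.log (Ψ (1 - α ^ i + α ^ i * z))) (-∑' k, T k) := by
      rw [show (fun i => Real.log (Ψ (1 - α ^ i + α ^ i * z)))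
          = fun i => -(∑' k, h (k, i)) from funext hΨlog]
      exact hSsum.neg
    have hprod : HasProd (fun i => Ψ (1 - α ^ i + α ^ i * z))
        (Real.exp (-∑' k, T k)) := by
      have := hlogsum.rexp
      rw [show (Real.exp ∘ fun i => Real.log (Ψ (1 - α ^ i + α ^ i * z)))
          = fun i => Ψ (1 - α ^ i + α ^ i * z) from
        funext fun i => Real.exp_log (hΨpos i)] at this
      exact this
    exact hprod.tprod_eq
end

section
/- Let α, q ∈ (0,1) and λ > 0, set β_j = λ q^j / (1 + λ q^j) for j ≥ 0 and B_n = ∑_{j=0}^∞ β_j^n for n ≥ 1 (these series converge, with B_n ≤ λ^n/(1 − q^n)). Let Ψ(z) = ∏_{j=0}^∞ (1 − β_j (1 − z)) be the pgf of the Heine(λ, q) distribution. Then the marginal pgf of the stationary INAR(1) process with Heine(λ, q) innovations satisfies, for every z ∈ [0,1]: (i) ∏_{i=0}^∞ Ψ(1 − α^i + α^i z) = ∏_{j=0}^∞ [ 1 + ∑_{n=1}^∞ β_j^n (z − 1)^n α^{n(n−1)/2} / ∏_{l=1}^{n} (1 − α^l) ], and (ii) ∏_{i=0}^∞ Ψ(1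 − α^i + α^i z) = exp( − ∑_{n=1}^∞ B_n (1 − z)^n / (n (1 − α^n)) ), with all series and infinite products converging. -/
open Real Finset

-- log bound
lemma aux_log_bound {u c : ℝ} (h0 : 0 ≤ u) (huc : u ≤ c) (hc1 : c < 1) :
    -Real.log (1 - u) ≤ u / (1 - c) := by
  have hu1 : u < 1 := lt_of_le_of_lt huc hc1
  have h1u : 0 < 1 - u := by linarith
  have h1c : 0 < 1 - c := by linarith
  rw [← Real.log_inv]
  have := Real.log_le_sub_one_of_pos (x := (1-u)⁻¹) (by positivity)
  have h2 : (1-u)⁻¹ - 1 = u / (1-u) := by field_simp; ring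
  have h3 : u / (1-u) ≤ u / (1-c) := by
    apply div_le_div_of_nonneg_left h0 h1c; linarith
  linarith [this, h2 ▸ this]

lemma aux_log_nonpos {u : ℝ} (h0 : 0 ≤ u) (hu1 : u < 1) : Real.log (1 - u) ≤ 0 :=
  Real.log_nonpos (by linarith) (by linarith)

-- summability of logs
lemma aux_summable_log {d : ℕ → ℝ} {c : ℝ} (hd : Summable d) (h0 : ∀ i, 0 ≤ d i)
    (hc : ∀ i, d i ≤ c) (hc1 : c < 1) :
    Summable (fun i => Real.log (1 - d i)) := by
  apply Summable.of_norm
  apply Summable.of_nonneg_of_le (g := fun i => ‖Real.log (1 - d i)‖)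
    (fun i => norm_nonneg _) ?_ (hd.div_const (1-c))
  intro i
  show ‖Real.log (1 - d i)‖ ≤ d i / (1 - c)
  rw [Real.norm_eq_abs, abs_of_nonpos (aux_log_nonpos (h0 i) (lt_of_le_of_lt (hc i) hc1))]
  exact aux_log_bound (h0 i) (hc i) hc1

-- product = exp(sum of logs)
lemma aux_hasProd_exp {ι : Type*} {f : ι → ℝ} (hf : ∀ i, 0 < f i) {s : ℝ}
    (h : HasSum (fun i => Real.log (f i)) s) : HasProd f (Real.exp s) := by
  have h2 := h.rexp
  have : Real.exp ∘ (fun i => Real.log (f i)) = f := funext fun i => Real.exp_log (hf i)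
  rwa [this] at h2

noncomputable def Qp (a : ℝ) (n : ℕ) : ℝ := ∏ l ∈ Finset.range n, (1 - a ^ (l + 1))

noncomputable def co (a : ℝ) (n : ℕ) : ℝ := (-1) ^ n * a ^ (n * (n - 1) / 2) / Qp a n

lemma Qp_pos {a : ℝ} (ha0 : 0 < a) (ha1 : a < 1) (n : ℕ) : 0 < Qp a n := by
  apply Finset.prod_pos
  intro l _
  have : a ^ (l + 1) < 1 := pow_lt_one₀ (le_of_lt ha0) ha1 (Nat.succ_ne_zero l)
  linarith

lemma Qp_anti {a : ℝ} (ha0 : 0 < a) (ha1 : a < 1) : Antitone (Qp a) := by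
  apply antitone_nat_of_succ_le
  intro n
  rw [Qp, Finset.prod_range_succ, ← Qp]
  have h1 : a ^ (n + 1) ≤ 1 := le_of_lt (pow_lt_one₀ (le_of_lt ha0) ha1 (Nat.succ_ne_zero n))
  have h2 : 0 < a ^ (n+1) := pow_pos ha0 _
  nlinarith [Qp_pos ha0 ha1 n]

-- uniform positive lower bound for Qp
lemma Qp_lower {a : ℝ} (ha0 : 0 < a) (ha1 : a < 1) :
    ∃ E : ℝ, 0 < E ∧ ∀ n, E ≤ Qp a n := by
  have hd : Summable (fun l : ℕ => a ^ (l + 1)) := by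
    have := (summable_geometric_of_lt_one (le_of_lt ha0) ha1).mul_left a
    simpa [pow_succ, mul_comm] using this
  have hlog : Summable (fun l : ℕ => Real.log (1 - a ^ (l + 1))) :=
    aux_summable_log hd (fun l => le_of_lt (pow_pos ha0 _))
      (fun l => by
        have := pow_le_pow_of_le_one (le_of_lt ha0) (le_of_lt ha1) (by omega : 1 ≤ l + 1)
        simpa using this) ha1
  obtain ⟨s, hs⟩ := hlog
  have hP : HasProd (fun l : ℕ => 1 - a ^ (l + 1)) (Real.exp s) := by
    apply aux_hasProd_exp (fun l => ?_) hs
    have : a ^ (l + 1) < 1 := pow_lt_one₀ (le_of_lt ha0) ha1 (Nat.succ_ne_zero l)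
    linarith
  refine ⟨Real.exp s, Real.exp_pos s, fun n => ?_⟩
  have ht : Filter.Tendsto (fun N => Qp a N) Filter.atTop (nhds (Real.exp s)) :=
    hP.tendsto_prod_nat
  apply le_of_tendsto ht
  filter_upwards [Filter.eventually_ge_atTop n] with N hN
  exact Qp_anti ha0 ha1 hN

lemma co_zero (a : ℝ) : co a 0 = 1 := by simp [co, Qp]

lemma co_rec {a : ℝ} (ha0 : 0 < a) (ha1 : a < 1) (n : ℕ) :
    co a (n + 1) = co a (n + 1) * a ^ (n + 1) - co a n * a ^ n := by
  have hQn := Qp_pos ha0 ha1 n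
  have hf : (0:ℝ) < 1 - a ^ (n + 1) := by
    have : a ^ (n + 1) < 1 := pow_lt_one₀ (le_of_lt ha0) ha1 (Nat.succ_ne_zero n)
    linarith
  have hQs : Qp a (n + 1) = Qp a n * (1 - a ^ (n + 1)) := by
    rw [Qp, Finset.prod_range_succ, ← Qp]
  have hexp : (n + 1) * ((n + 1) - 1) / 2 = n * (n - 1) / 2 + n := by
    rcases n with _ | m
    · simp
    · have h1 : (m + 2) * (m + 2 - 1) = (m + 1) * (m + 1 - 1) + 2 * (m + 1) := by
        simp [Nat.succ_sub_one]; ring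
      rw [h1, Nat.add_mul_div_left _ _ (by norm_num : 0 < 2)]
  have key : co a (n + 1) * (1 - a ^ (n + 1)) = -(co a n * a ^ n) := by
    rw [co, co, hQs, hexp, pow_add]
    field_simp
    ring
  nlinarith [key]

lemma co_bdd {a : ℝ} (ha0 : 0 < a) (ha1 : a < 1) :
    ∃ C : ℝ, 0 < C ∧ ∀ n, |co a n| ≤ C := by
  obtain ⟨E, hE0, hE⟩ := Qp_lower ha0 ha1
  refine ⟨E⁻¹, inv_pos.mpr hE0, fun n => ?_⟩
  rw [co, abs_div, abs_mul, abs_pow, abs_neg, abs_one, one_pow, one_mul,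
    abs_of_pos (pow_pos ha0 _), abs_of_pos (Qp_pos ha0 ha1 n)]
  have h1 : a ^ (n * (n - 1) / 2) ≤ 1 := pow_le_one₀ (le_of_lt ha0) (le_of_lt ha1)
  calc a ^ (n * (n - 1) / 2) / Qp a n ≤ 1 / Qp a n :=
        (div_le_div_iff_of_pos_right (Qp_pos ha0 ha1 n)).mpr h1
    _ ≤ E⁻¹ := by
        rw [one_div]
        exact inv_anti₀ hE0 (hE n)

lemma summable_co_pow {a x : ℝ} (ha0 : 0 < a) (ha1 : a < 1) (hx0 : 0 ≤ x) (hx1 : x < 1) :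
    Summable (fun n => co a n * x ^ n) := by
  obtain ⟨C, hC0, hC⟩ := co_bdd ha0 ha1
  apply Summable.of_norm
  have hg : Summable (fun n : ℕ => C * x ^ n) := (summable_geometric_of_lt_one hx0 hx1).mul_left C
  refine Summable.of_nonneg_of_le (fun n => norm_nonneg _) (fun n => ?_) hg
  show ‖co a n * x ^ n‖ ≤ C * x ^ n
  rw [norm_mul, Real.norm_eq_abs, Real.norm_eq_abs, abs_pow, abs_of_nonneg hx0]
  exact mul_le_mul_of_nonneg_right (hC n) (pow_nonneg hx0 n)

noncomputable def Sa (a x : ℝ) : ℝ := ∑' n : ℕ, co a n * x ^ n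

lemma hasSum_Sa {a x : ℝ} (ha0 : 0 < a) (ha1 : a < 1) (hx0 : 0 ≤ x) (hx1 : x < 1) :
    HasSum (fun n => co a n * x ^ n) (Sa a x) :=
  (summable_co_pow ha0 ha1 hx0 hx1).hasSum

lemma Sa_funeq {a x : ℝ} (ha0 : 0 < a) (ha1 : a < 1) (hx0 : 0 ≤ x) (hx1 : x < 1) :
    Sa a x = (1 - x) * Sa a (a * x) := by
  have hax0 : 0 ≤ a * x := mul_nonneg (le_of_lt ha0) hx0
  have hax1 : a * x < 1 := lt_of_le_of_lt (mul_le_of_le_one_left hx0 (le_of_lt ha1)) hx1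
  have h1 := hasSum_Sa ha0 ha1 hax0 hax1
  have e1 : (fun n => co a n * (a * x) ^ n) = (fun n => co a n * a ^ n * x ^ n) :=
    funext fun n => by rw [mul_pow]; ring
  rw [e1] at h1
  have h2 : HasSum (fun n => x * (co a n * a ^ n * x ^ n)) (x * Sa a (a * x)) := h1.mul_left x
  set v : ℕ → ℝ := fun n => Nat.rec (motive := fun _ => ℝ) 0
    (fun k _ => co a k * a ^ k * x ^ (k + 1)) n with hv
  have e2 : (fun n => v (n + 1)) = (fun n => x * (co a n * a ^ n * x ^ n)) :=
    funext fun n => by simp only [hv]; rw [pow_succ]; ring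
  have h3 : HasSum v (x * Sa a (a * x)) := by
    rw [← e2] at h2
    rw [hasSum_nat_add_iff 1] at h2
    have hv0 : v 0 = 0 := rfl
    simpa [hv0] using h2
  have h4 := h1.sub h3
  have e3 : (fun n => co a n * a ^ n * x ^ n - v n) = (fun n => co a n * x ^ n) := by
    funext n
    rcases n with _ | k
    · simp [hv]
    · show co a (k+1) * a ^ (k+1) * x ^ (k+1) - co a k * a ^ k * x ^ (k+1) = _
      have := co_rec ha0 ha1 k
      linear_combination (-(x ^ (k + 1))) * this
  rw [e3] at h4
  have := (hasSum_Sa ha0 ha1 hx0 hx1).unique h4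
  rw [this]; ring

lemma Sa_iter {a x : ℝ} (ha0 : 0 < a) (ha1 : a < 1) (hx0 : 0 ≤ x) (hx1 : x < 1) (N : ℕ) :
    Sa a x = (∏ i ∈ Finset.range N, (1 - x * a ^ i)) * Sa a (a ^ N * x) := by
  induction N with
  | zero => simp
  | succ N ih =>
    have hy0 : 0 ≤ a ^ N * x := mul_nonneg (le_of_lt (pow_pos ha0 N)) hx0
    have hy1 : a ^ N * x < 1 :=
      lt_of_le_of_lt (mul_le_of_le_one_left hx0 (pow_le_one₀ (le_of_lt ha0) (le_of_lt ha1))) hx1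
    have := Sa_funeq ha0 ha1 hy0 hy1
    rw [Finset.prod_range_succ, ih, this]
    have e : a * (a ^ N * x) = a ^ (N + 1) * x := by rw [pow_succ]; ring
    rw [e]; ring


lemma Sa_sub_one {a x : ℝ} (ha0 : 0 < a) (ha1 : a < 1) (hx0 : 0 ≤ x) (hx1 : x < 1) :
    ∃ C : ℝ, 0 < C ∧ ∀ y : ℝ, 0 ≤ y → y ≤ x → |Sa a y - 1| ≤ C * y := by
  obtain ⟨C, hC0, hC⟩ := co_bdd ha0 ha1
  have hix : 0 < (1 - x)⁻¹ := inv_pos.mpr (by linarith)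
  refine ⟨C * (1 - x)⁻¹ + 1, by positivity, fun y hy0 hyx => ?_⟩
  have hy1 : y < 1 := lt_of_le_of_lt hyx hx1
  have h := hasSum_Sa ha0 ha1 hy0 hy1
  have h2 : HasSum (fun n => co a (n + 1) * y ^ (n + 1)) (Sa a y - 1) := by
    refine (hasSum_nat_add_iff (f := fun n => co a n * y ^ n) 1).mpr ?_
    have e : Sa a y - 1 + ∑ i ∈ Finset.range 1, co a i * y ^ i = Sa a y := by
      simp [co_zero a]
    rwa [e]
  have hgs : Summable (fun n : ℕ => C * y * x ^ n) :=
    (summable_geometric_of_lt_one hx0 hx1).mul_left (C * y)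
  have hbound : ∀ n : ℕ, ‖co a (n + 1) * y ^ (n + 1)‖ ≤ C * y * x ^ n := by
    intro n
    rw [norm_mul, Real.norm_eq_abs, Real.norm_eq_abs, abs_pow, abs_of_nonneg hy0]
    calc |co a (n+1)| * y ^ (n+1) ≤ C * y ^ (n + 1) :=
          mul_le_mul_of_nonneg_right (hC _) (pow_nonneg hy0 _)
      _ = C * (y * y ^ n) := by rw [pow_succ]; ring
      _ ≤ C * (y * x ^ n) := by
          apply mul_le_mul_of_nonneg_left _ (le_of_lt hC0)
          exact mul_le_mul_of_nonneg_left (pow_le_pow_left₀ hy0 hyx n) hy0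
      _ = C * y * x ^ n := by ring
  have hsn : Summable (fun n => ‖co a (n + 1) * y ^ (n + 1)‖) :=
    Summable.of_nonneg_of_le (fun n => norm_nonneg _) hbound hgs
  calc |Sa a y - 1| = ‖∑' n, co a (n + 1) * y ^ (n + 1)‖ := by
        rw [h2.tsum_eq]; rfl
    _ ≤ ∑' n, ‖co a (n + 1) * y ^ (n + 1)‖ := norm_tsum_le_tsum_norm hsn
    _ ≤ ∑' n : ℕ, C * y * x ^ n := Summable.tsum_le_tsum hbound hsn hgs
    _ = C * y * (1 - x)⁻¹ := by
        rw [tsum_mul_left, tsum_geometric_of_lt_one hx0 hx1]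
    _ ≤ (C * (1 - x)⁻¹ + 1) * y := by nlinarith


lemma euler_hasSum {a x : ℝ} (ha0 : 0 < a) (ha1 : a < 1) (hx0 : 0 ≤ x) (hx1 : x < 1)
    {P : ℝ} (hP : HasProd (fun i : ℕ => 1 - x * a ^ i) P) :
    HasSum (fun n => co a n * x ^ n) P := by
  suffices hSP : Sa a x = P by
    rw [← hSP]; exact hasSum_Sa ha0 ha1 hx0 hx1
  have ht1 : Filter.Tendsto (fun N => ∏ i ∈ Finset.range N, (1 - x * a ^ i))
      Filter.atTop (nhds P) := hP.tendsto_prod_nat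
  obtain ⟨C, hC0, hCb⟩ : ∃ C : ℝ, 0 < C ∧ ∀ N : ℕ, |Sa a (a ^ N * x) - 1| ≤ C * (a ^ N * x) := by
    obtain ⟨C, hC0, hC⟩ := Sa_sub_one ha0 ha1 hx0 hx1
    exact ⟨C, hC0, fun N => hC _ (mul_nonneg (le_of_lt (pow_pos ha0 N)) hx0)
      (mul_le_of_le_one_left hx0 (pow_le_one₀ (le_of_lt ha0) (le_of_lt ha1)))⟩
  have ht2 : Filter.Tendsto (fun N => Sa a (a ^ N * x)) Filter.atTop (nhds 1) := by
    have hz : Filter.Tendsto (fun N : ℕ => Sa a (a ^ N * x) - 1) Filter.atTop (nhds 0) := by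
      apply squeeze_zero_norm (fun N => hCb N)
      have : Filter.Tendsto (fun N : ℕ => C * (a ^ N * x)) Filter.atTop (nhds (C * (0 * x))) := by
        apply Filter.Tendsto.mul tendsto_const_nhds
        exact (tendsto_pow_atTop_nhds_zero_of_lt_one (le_of_lt ha0) ha1).mul_const x
      simpa using this
    have := hz.add_const 1
    simpa using this
  have ht3 : Filter.Tendsto
      (fun N => (∏ i ∈ Finset.range N, (1 - x * a ^ i)) * Sa a (a ^ N * x))
      Filter.atTop (nhds (P * 1)) := ht1.mul ht2
  rw [mul_one] at ht3
  have he : (fun N => (∏ i ∈ Finset.range N, (1 - x * a ^ i)) * Sa a (a ^ N * x))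
      = fun _ => Sa a x := funext fun N => (Sa_iter ha0 ha1 hx0 hx1 N).symm
  rw [he] at ht3
  exact tendsto_nhds_unique tendsto_const_nhds ht3


lemma summable_log_geom {a x : ℝ} (ha0 : 0 < a) (ha1 : a < 1) (hx0 : 0 ≤ x) (hx1 : x < 1) :
    Summable (fun i : ℕ => Real.log (1 - x * a ^ i)) := by
  apply aux_summable_log (c := x) ((summable_geometric_of_lt_one (le_of_lt ha0) ha1).mul_left x)
    (fun i => mul_nonneg hx0 (le_of_lt (pow_pos ha0 i)))
    (fun i => mul_le_of_le_one_right hx0 (pow_le_one₀ (le_of_lt ha0) (le_of_lt ha1))) hx1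

lemma factor_pos {a x : ℝ} (ha0 : 0 < a) (ha1 : a < 1) (hx0 : 0 ≤ x) (hx1 : x < 1) (i : ℕ) :
    0 < 1 - x * a ^ i := by
  have h1 : x * a ^ i ≤ x := mul_le_of_le_one_right hx0 (pow_le_one₀ (le_of_lt ha0) (le_of_lt ha1))
  linarith

lemma log_expand {a x : ℝ} (ha0 : 0 < a) (ha1 : a < 1) (hx0 : 0 ≤ x) (hx1 : x < 1) :
    HasSum (fun n : ℕ => x ^ (n + 1) / (((n : ℝ) + 1) * (1 - a ^ (n + 1))))
      (-∑' i : ℕ, Real.log (1 - x * a ^ i)) := by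
  set F : ℕ × ℕ → ℝ := fun p => (x * a ^ p.1) ^ (p.2 + 1) / ((p.2 : ℝ) + 1) with hF
  have hxa : ∀ i : ℕ, 0 ≤ x * a ^ i ∧ x * a ^ i < 1 := fun i =>
    ⟨mul_nonneg hx0 (le_of_lt (pow_pos ha0 i)),
     lt_of_le_of_lt (mul_le_of_le_one_right hx0 (pow_le_one₀ (le_of_lt ha0) (le_of_lt ha1))) hx1⟩
  have hrow : ∀ i : ℕ, HasSum (fun n => F (i, n)) (-Real.log (1 - x * a ^ i)) := by
    intro i
    have h := hasSum_pow_div_log_of_abs_lt_one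
      (x := x * a ^ i) (by rw [abs_of_nonneg (hxa i).1]; exact (hxa i).2)
    convert h using 2 with n
  have han1 : ∀ n : ℕ, (0:ℝ) < 1 - a ^ (n + 1) := by
    intro n
    have : a ^ (n + 1) < 1 := pow_lt_one₀ (le_of_lt ha0) ha1 (Nat.succ_ne_zero n)
    linarith
  have hcol : ∀ n : ℕ, HasSum (fun i => F (i, n))
      (x ^ (n + 1) / (((n : ℝ) + 1) * (1 - a ^ (n + 1)))) := by
    intro n
    have hg := (hasSum_geometric_of_lt_one (le_of_lt (pow_pos ha0 (n+1)))
      (pow_lt_one₀ (le_of_lt ha0) ha1 (Nat.succ_ne_zero n))).mul_left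
      (x ^ (n + 1) / ((n : ℝ) + 1))
    have he : (fun i => x ^ (n + 1) / ((n : ℝ) + 1) * (a ^ (n + 1)) ^ i)
        = fun i => F (i, n) := by
      funext i
      rw [hF]
      show x ^ (n+1) / ((n : ℝ)+1) * (a ^ (n+1)) ^ i = (x * a ^ i) ^ (n+1) / ((n : ℝ)+1)
      rw [mul_pow, ← pow_mul, ← pow_mul, Nat.mul_comm i (n+1)]
      ring
    rw [he] at hg
    convert hg using 1
    have h1 : ((n:ℝ) + 1) ≠ 0 := by positivity
    have h2 : (1:ℝ) - a ^ (n+1) ≠ 0 := ne_of_gt (han1 n)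
    rfl
    rw [div_mul_eq_div_div, div_eq_mul_inv]
  have hFnn : ∀ p : ℕ × ℕ, 0 ≤ F p := by
    intro p
    apply div_nonneg (pow_nonneg (hxa p.1).1 _) (by positivity)
  have hFsum : Summable F := by
    apply (summable_prod_of_nonneg hFnn).mpr
    constructor
    · exact fun i => (hrow i).summable
    · have he : (fun i => ∑' n, F (i, n)) = fun i => -Real.log (1 - x * a ^ i) :=
        funext fun i => (hrow i).tsum_eq
      rw [he]
      exact (summable_log_geom ha0 ha1 hx0 hx1).neg
  have h1 : HasSum (fun i => -Real.log (1 - x * a ^ i)) (∑' p, F p) :=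
    hFsum.hasSum.prod_fiberwise hrow
  have hTs : (∑' p, F p) = -∑' i : ℕ, Real.log (1 - x * a ^ i) :=
    h1.unique ((summable_log_geom ha0 ha1 hx0 hx1).hasSum.neg)
  have hs2 : HasSum (fun p : ℕ × ℕ => F (p.2, p.1)) (∑' p, F p) :=
    ((Equiv.prodComm ℕ ℕ).hasSum_iff).mpr hFsum.hasSum
  have h2 := hs2.prod_fiberwise (fun n => hcol n)
  rwa [hTs] at h2


set_option maxHeartbeats 2000000 in
/-- Let `α, q ∈ (0,1)` and `λ > 0`, set `β_j = λ q^j / (1 + λ q^j)` and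
`B_n = ∑_{j=0}^∞ β_j^n` for `n ≥ 1` (these series converge, with `B_n ≤ λ^n/(1 − q^n)`).
Let `Ψ(z) = ∏_{j=0}^∞ (1 − β_j (1 − z))` be the pgf of the Heine(λ, q) distribution. Then
the marginal pgf of the stationary INAR(1) process with Heine(λ, q) innovations satisfies,
for every `z ∈ [0,1]`:
(i) `∏_{i=0}^∞ Ψ(1 − α^i + α^i z)
      = ∏_{j=0}^∞ [1 + ∑_{n=1}^∞ β_j^n (z − 1)^n α^{n(n−1)/2} / ∏_{l=1}^{n} (1 − α^l)]`, and
(ii) `∏_{i=0}^∞ Ψ(1 − α^i + α^i z) = exp(− ∑_{n=1}^∞ B_n (1 − z)^n / (n (1 − α^n)))`,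
with all series converging (inner series indexed by `n = k + 1`, `k ∈ ℕ`). -/
theorem stmt_19 (α q lam : ℝ) (hα : α ∈ Set.Ioo (0 : ℝ) 1) (hq : q ∈ Set.Ioo (0 : ℝ) 1)
    (hlam : 0 < lam)
    (β : ℕ → ℝ) (hβ : ∀ j, β j = lam * q ^ j / (1 + lam * q ^ j))
    (B : ℕ → ℝ) (hB : ∀ n, B n = ∑' j : ℕ, β j ^ n)
    (Ψ : ℝ → ℝ) (hΨ : ∀ z, Ψ z = ∏' j : ℕ, (1 - β j * (1 - z))) :
    (∀ n : ℕ, 1 ≤ n →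
      (Summable fun j : ℕ => β j ^ n) ∧ B n ≤ lam ^ n / (1 - q ^ n)) ∧
    (∀ z ∈ Set.Icc (0 : ℝ) 1,
      (∀ j : ℕ, Summable fun k : ℕ =>
        β j ^ (k + 1) * (z - 1) ^ (k + 1) * α ^ ((k + 1) * k / 2)
          / ∏ l ∈ Finset.range (k + 1), (1 - α ^ (l + 1))) ∧
      (Summable fun k : ℕ =>
        B (k + 1) * (1 - z) ^ (k + 1) / ((k + 1 : ℝ) * (1 - α ^ (k + 1)))) ∧
      (∏' i : ℕ, Ψ (1 - α ^ i + α ^ i * z)) =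
        (∏' j : ℕ, (1 + ∑' k : ℕ,
          β j ^ (k + 1) * (z - 1) ^ (k + 1) * α ^ ((k + 1) * k / 2)
            / ∏ l ∈ Finset.range (k + 1), (1 - α ^ (l + 1)))) ∧
      (∏' i : ℕ, Ψ (1 - α ^ i + α ^ i * z)) =
        Real.exp (- ∑' k : ℕ,
          B (k + 1) * (1 - z) ^ (k + 1) / ((k + 1 : ℝ) * (1 - α ^ (k + 1))))) := by
  obtain ⟨ha0, ha1⟩ := hα
  obtain ⟨hq0, hq1⟩ := hq
  set b : ℝ := lam / (1 + lam) with hbdef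
  have h1lam : (0:ℝ) < 1 + lam := by linarith
  have hb0 : 0 ≤ b := le_of_lt (div_pos hlam h1lam)
  have hb1 : b < 1 := by
    rw [hbdef, div_lt_one h1lam]; linarith
  have hβnn : ∀ j, 0 ≤ β j := by
    intro j
    rw [hβ j]
    have h2 : 0 < lam * q ^ j := mul_pos hlam (pow_pos hq0 j)
    positivity
  have hβle : ∀ j, β j ≤ lam * q ^ j := by
    intro j
    rw [hβ j]
    have h2 : 0 < lam * q ^ j := mul_pos hlam (pow_pos hq0 j)
    apply div_le_self (le_of_lt h2)
    linarith
  have hβb : ∀ j, β j ≤ b := by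
    intro j
    rw [hβ j, hbdef]
    have h2 : 0 < lam * q ^ j := mul_pos hlam (pow_pos hq0 j)
    rw [div_le_div_iff₀ (by linarith) h1lam]
    have hq1' : q ^ j ≤ 1 := pow_le_one₀ (le_of_lt hq0) (le_of_lt hq1)
    nlinarith
  have hβsum : Summable β := by
    apply Summable.of_nonneg_of_le hβnn hβle
    exact (summable_geometric_of_lt_one (le_of_lt hq0) hq1).mul_left lam
  -- Part 1
  have part1 : ∀ n : ℕ, 1 ≤ n →
      (Summable fun j : ℕ => β j ^ n) ∧ B n ≤ lam ^ n / (1 - q ^ n) := by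
    intro n hn
    have hqn1 : q ^ n < 1 := pow_lt_one₀ (le_of_lt hq0) hq1 (by omega)
    have hqn0 : 0 ≤ q ^ n := le_of_lt (pow_pos hq0 n)
    have hbound : ∀ j, β j ^ n ≤ lam ^ n * (q ^ n) ^ j := by
      intro j
      calc β j ^ n ≤ (lam * q ^ j) ^ n := pow_le_pow_left₀ (hβnn j) (hβle j) n
        _ = lam ^ n * (q ^ n) ^ j := by
            rw [mul_pow, ← pow_mul, ← pow_mul, Nat.mul_comm j n]
    have hgsum : Summable (fun j : ℕ => lam ^ n * (q ^ n) ^ j) :=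
      (summable_geometric_of_lt_one hqn0 hqn1).mul_left (lam ^ n)
    have hsumn : Summable (fun j : ℕ => β j ^ n) :=
      Summable.of_nonneg_of_le (fun j => pow_nonneg (hβnn j) n) hbound hgsum
    refine ⟨hsumn, ?_⟩
    rw [hB n]
    calc (∑' j : ℕ, β j ^ n) ≤ ∑' j : ℕ, lam ^ n * (q ^ n) ^ j :=
          Summable.tsum_le_tsum hbound hsumn hgsum
      _ = lam ^ n * (1 - q ^ n)⁻¹ := by
          rw [tsum_mul_left, tsum_geometric_of_lt_one hqn0 hqn1]
      _ = lam ^ n / (1 - q ^ n) := by rw [div_eq_mul_inv]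
  refine ⟨part1, ?_⟩
  intro z hz
  obtain ⟨hz0, hz1⟩ := hz
  set t : ℝ := 1 - z with htdef
  have ht0 : 0 ≤ t := by rw [htdef]; linarith
  have ht1 : t ≤ 1 := by rw [htdef]; linarith
  set x : ℕ → ℝ := fun j => β j * t with hxdef
  have hx0 : ∀ j, 0 ≤ x j := fun j => mul_nonneg (hβnn j) ht0
  have hxb : ∀ j, x j ≤ b := fun j =>
    le_trans (mul_le_of_le_one_right (hβnn j) ht1) (hβb j)
  have hx1 : ∀ j, x j < 1 := fun j => lt_of_le_of_lt (hxb j) hb1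
  -- per-i inner product
  set y : ℕ → ℝ := fun i => α ^ i * t with hydef
  have hy0 : ∀ i, 0 ≤ y i := fun i => mul_nonneg (le_of_lt (pow_pos ha0 i)) ht0
  have hy1 : ∀ i, y i ≤ 1 := fun i =>
    mul_le_one₀ (pow_le_one₀ (le_of_lt ha0) (le_of_lt ha1)) ht0 ht1
  have hd0 : ∀ i j, 0 ≤ β j * y i := fun i j => mul_nonneg (hβnn j) (hy0 i)
  have hdb : ∀ i j, β j * y i ≤ b := fun i j =>
    le_trans (mul_le_of_le_one_right (hβnn j) (hy1 i)) (hβb j)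
  have hli : ∀ i, Summable (fun j => Real.log (1 - β j * y i)) := by
    intro i
    exact aux_summable_log (hβsum.mul_right (y i)) (hd0 i) (hdb i) hb1
  set ℓi : ℕ → ℝ := fun i => ∑' j, Real.log (1 - β j * y i) with hℓi
  have hΨi : ∀ i, Ψ (1 - α ^ i + α ^ i * z) = Real.exp (ℓi i) := by
    intro i
    have harg : ∀ j, 1 - β j * (1 - (1 - α ^ i + α ^ i * z)) = 1 - β j * y i := by
      intro j
      rw [hydef, htdef]; ring
    rw [hΨ]
    have he : (fun j => 1 - β j * (1 - (1 - α ^ i + α ^ i * z)))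
        = fun j => 1 - β j * y i := funext harg
    rw [he]
    have hp : HasProd (fun j => 1 - β j * y i) (Real.exp (ℓi i)) := by
      apply aux_hasProd_exp (fun j => by have := hdb i j; have := hd0 i j; linarith)
        (hli i).hasSum
    exact hp.tprod_eq
  -- double log sum
  set G : ℕ × ℕ → ℝ := fun p => Real.log (1 - β p.2 * y p.1) with hG
  have hGsum : Summable G := by
    apply Summable.of_norm
    have hM : Summable (fun p : ℕ × ℕ => α ^ p.1 * β p.2 * (1 - b)⁻¹) := by
      apply Summable.mul_right
      exact (summable_geometric_of_lt_one (le_of_lt ha0) ha1).mul_of_nonneg hβsum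
        (fun i => le_of_lt (pow_pos ha0 i)) hβnn
    apply Summable.of_nonneg_of_le (fun p => norm_nonneg _) (fun p => ?_) hM
    show ‖Real.log (1 - β p.2 * y p.1)‖ ≤ α ^ p.1 * β p.2 * (1 - b)⁻¹
    rw [Real.norm_eq_abs,
      abs_of_nonpos (aux_log_nonpos (hd0 p.1 p.2) (lt_of_le_of_lt (hdb p.1 p.2) hb1))]
    calc -Real.log (1 - β p.2 * y p.1) ≤ (β p.2 * y p.1) / (1 - b) :=
          aux_log_bound (hd0 p.1 p.2) (hdb p.1 p.2) hb1
      _ ≤ α ^ p.1 * β p.2 * (1 - b)⁻¹ := by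
          rw [div_eq_mul_inv]
          apply mul_le_mul_of_nonneg_right _ (inv_nonneg.mpr (by linarith))
          have : y p.1 ≤ α ^ p.1 := mul_le_of_le_one_right (le_of_lt (pow_pos ha0 p.1)) ht1
          calc β p.2 * y p.1 ≤ β p.2 * α ^ p.1 :=
                mul_le_mul_of_nonneg_left this (hβnn p.2)
            _ = α ^ p.1 * β p.2 := by ring
  have hfib_i : ∀ i, HasSum (fun j => G (i, j)) (ℓi i) := fun i => (hli i).hasSum
  have hSi : HasSum ℓi (∑' p, G p) := hGsum.hasSum.prod_fiberwise hfib_i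
  set Stot : ℝ := ∑' p, G p with hStot
  have hLHS : (∏' i : ℕ, Ψ (1 - α ^ i + α ^ i * z)) = Real.exp Stot := by
    have he : (fun i : ℕ => Ψ (1 - α ^ i + α ^ i * z)) = fun i => Real.exp (ℓi i) :=
      funext hΨi
    rw [he]
    have hp : HasProd (fun i => Real.exp (ℓi i)) (Real.exp Stot) := by
      have := hSi.rexp
      exact this
    exact hp.tprod_eq
  -- per-j fibers
  set ℓj : ℕ → ℝ := fun j => ∑' i, Real.log (1 - x j * α ^ i) with hℓj
  have hGji : ∀ j i, G (i, j) = Real.log (1 - x j * α ^ i) := by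
    intro j i
    rw [hG, hxdef, hydef]
    show Real.log (1 - β j * (α ^ i * t)) = Real.log (1 - β j * t * α ^ i)
    ring_nf
  have hfib_j : ∀ j, HasSum (fun i => G (i, j)) (ℓj j) := by
    intro j
    have h := (summable_log_geom ha0 ha1 (hx0 j) (hx1 j)).hasSum
    rw [hℓj]
    have he : (fun i => G (i, j)) = fun i => Real.log (1 - x j * α ^ i) :=
      funext (hGji j)
    rw [he]
    exact h
  have hswap : HasSum (fun p : ℕ × ℕ => G (p.2, p.1)) Stot :=
    ((Equiv.prodComm ℕ ℕ).hasSum_iff).mpr hGsum.hasSum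
  have hj : HasSum ℓj Stot := hswap.prod_fiberwise hfib_j
  -- Euler per j
  have hPj : ∀ j, HasProd (fun i => 1 - x j * α ^ i) (Real.exp (ℓj j)) := by
    intro j
    exact aux_hasProd_exp (factor_pos ha0 ha1 (hx0 j) (hx1 j))
      (summable_log_geom ha0 ha1 (hx0 j) (hx1 j)).hasSum
  have heul : ∀ j, HasSum (fun n => co α n * x j ^ n) (Real.exp (ℓj j)) := fun j =>
    euler_hasSum ha0 ha1 (hx0 j) (hx1 j) (hPj j)
  have hterm : ∀ j k, β j ^ (k + 1) * (z - 1) ^ (k + 1) * α ^ ((k + 1) * k / 2)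
      / ∏ l ∈ Finset.range (k + 1), (1 - α ^ (l + 1)) = co α (k + 1) * x j ^ (k + 1) := by
    intro j k
    rw [co, Qp, hxdef]
    show β j ^ (k + 1) * (z - 1) ^ (k + 1) * α ^ ((k + 1) * k / 2)
      / ∏ l ∈ Finset.range (k + 1), (1 - α ^ (l + 1))
      = (-1) ^ (k+1) * α ^ ((k + 1) * ((k+1) - 1) / 2)
        / (∏ l ∈ Finset.range (k + 1), (1 - α ^ (l + 1))) * (β j * t) ^ (k + 1)
    rw [Nat.add_sub_cancel, htdef,
      show z - 1 = -(1 - z) by ring, neg_pow, mul_pow]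
    ring
  have hshift : ∀ j, HasSum (fun k => co α (k + 1) * x j ^ (k + 1))
      (Real.exp (ℓj j) - 1) := by
    intro j
    refine (hasSum_nat_add_iff (f := fun n => co α n * x j ^ n) 1).mpr ?_
    have e : Real.exp (ℓj j) - 1 + ∑ i ∈ Finset.range 1, co α i * x j ^ i
        = Real.exp (ℓj j) := by simp [co_zero α]
    rw [e]
    exact heul j
  have hsum_i : ∀ j : ℕ, Summable fun k : ℕ =>
      β j ^ (k + 1) * (z - 1) ^ (k + 1) * α ^ ((k + 1) * k / 2)
        / ∏ l ∈ Finset.range (k + 1), (1 - α ^ (l + 1)) := by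
    intro j
    have he : (fun k : ℕ => β j ^ (k + 1) * (z - 1) ^ (k + 1) * α ^ ((k + 1) * k / 2)
        / ∏ l ∈ Finset.range (k + 1), (1 - α ^ (l + 1)))
        = fun k => co α (k + 1) * x j ^ (k + 1) := funext (hterm j)
    rw [he]
    exact (hshift j).summable
  have hone_add : ∀ j, (1 + ∑' k : ℕ,
      β j ^ (k + 1) * (z - 1) ^ (k + 1) * α ^ ((k + 1) * k / 2)
        / ∏ l ∈ Finset.range (k + 1), (1 - α ^ (l + 1))) = Real.exp (ℓj j) := by
    intro j
    have he : (fun k : ℕ => β j ^ (k + 1) * (z - 1) ^ (k + 1) * α ^ ((k + 1) * k / 2)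
        / ∏ l ∈ Finset.range (k + 1), (1 - α ^ (l + 1)))
        = fun k => co α (k + 1) * x j ^ (k + 1) := funext (hterm j)
    rw [he, (hshift j).tsum_eq]
    ring
  have hstmt_i : (∏' i : ℕ, Ψ (1 - α ^ i + α ^ i * z)) =
      (∏' j : ℕ, (1 + ∑' k : ℕ,
        β j ^ (k + 1) * (z - 1) ^ (k + 1) * α ^ ((k + 1) * k / 2)
          / ∏ l ∈ Finset.range (k + 1), (1 - α ^ (l + 1)))) := by
    rw [hLHS]
    have he : (fun j : ℕ => (1 + ∑' k : ℕ,
        β j ^ (k + 1) * (z - 1) ^ (k + 1) * α ^ ((k + 1) * k / 2)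
          / ∏ l ∈ Finset.range (k + 1), (1 - α ^ (l + 1))))
        = fun j => Real.exp (ℓj j) := funext hone_add
    rw [he]
    exact (hj.rexp.tprod_eq).symm
  -- part (ii)
  set H : ℕ × ℕ → ℝ := fun p => x p.1 ^ (p.2 + 1)
    / (((p.2 : ℝ) + 1) * (1 - α ^ (p.2 + 1))) with hH
  have hHrow : ∀ j, HasSum (fun n => H (j, n)) (-ℓj j) := by
    intro j
    exact log_expand ha0 ha1 (hx0 j) (hx1 j)
  have hHcol : ∀ n : ℕ, HasSum (fun j => H (j, n))
      (B (n + 1) * (1 - z) ^ (n + 1) / ((n + 1 : ℝ) * (1 - α ^ (n + 1)))) := by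
    intro n
    have hs := ((part1 (n + 1) (by omega)).1).hasSum
    have hs2 := hs.mul_right ((1 - z) ^ (n + 1) / ((n + 1 : ℝ) * (1 - α ^ (n + 1))))
    have hBe : B (n + 1) = ∑' j, β j ^ (n + 1) := hB (n + 1)
    rw [← hBe] at hs2
    have he : (fun j => β j ^ (n + 1) * ((1 - z) ^ (n + 1)
        / ((n + 1 : ℝ) * (1 - α ^ (n + 1))))) = fun j => H (j, n) := by
      funext j
      rw [hH, hxdef]
      show β j ^ (n+1) * ((1 - z) ^ (n+1) / (((n:ℝ)+1) * (1 - α ^ (n+1))))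
        = (β j * t) ^ (n+1) / (((n:ℝ)+1) * (1 - α ^ (n+1)))
      rw [htdef, mul_pow]
      ring
    rw [he] at hs2
    have hv : B (n + 1) * ((1 - z) ^ (n + 1) / ((n + 1 : ℝ) * (1 - α ^ (n + 1))))
        = B (n + 1) * (1 - z) ^ (n + 1) / ((n + 1 : ℝ) * (1 - α ^ (n + 1))) := by
      ring
    rwa [hv] at hs2
  have hHnn : ∀ p : ℕ × ℕ, 0 ≤ H p := by
    intro p
    rw [hH]
    have h1 : (0:ℝ) < 1 - α ^ (p.2 + 1) := by
      have : α ^ (p.2 + 1) < 1 := pow_lt_one₀ (le_of_lt ha0) ha1 (Nat.succ_ne_zero p.2)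
      linarith
    have h2 : (0:ℝ) < (p.2 : ℝ) + 1 := by positivity
    exact div_nonneg (pow_nonneg (hx0 p.1) _) (le_of_lt (mul_pos h2 h1))
  have hHsum : Summable H := by
    apply (summable_prod_of_nonneg hHnn).mpr
    refine ⟨fun j => (hHrow j).summable, ?_⟩
    have he : (fun j => ∑' n, H (j, n)) = fun j => -ℓj j :=
      funext fun j => (hHrow j).tsum_eq
    rw [he]
    exact hj.summable.neg
  have hT1 : HasSum (fun j => -ℓj j) (∑' p, H p) := hHsum.hasSum.prod_fiberwise hHrow
  have hTeq : (∑' p, H p) = -Stot := hT1.unique hj.neg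
  have hswapH : HasSum (fun p : ℕ × ℕ => H (p.2, p.1)) (∑' p, H p) :=
    ((Equiv.prodComm ℕ ℕ).hasSum_iff).mpr hHsum.hasSum
  have hcolsum : HasSum (fun n : ℕ =>
      B (n + 1) * (1 - z) ^ (n + 1) / ((n + 1 : ℝ) * (1 - α ^ (n + 1)))) (-Stot) := by
    have := hswapH.prod_fiberwise hHcol
    rwa [hTeq] at this
  refine ⟨hsum_i, hcolsum.summable, hstmt_i, ?_⟩
  rw [hLHS, hcolsum.tsum_eq, neg_neg]
end
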